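/- arXiv:2503.15033 — 4 statements merged into one kernel-verified Lean document; each statement's English description precedes it below -/
import Mathlib

section
/- Let α0 < α1 be real numbers with α0, α1 ∈ ℝ. For j = 0,1 let ξ_j, L1_j, L2_j : (0,∞) → ℝ be differentiable solutions of the reduced U(2)-invariant expander system satisfying the boundary conditions at 0 with parameter α_j. Then for all t ∈ (0,∞): ξ_1(t) > ξ_0(t), 0 < L1_1(t) < L1_0(t), and 0 < L2_1(t) < L2_0(t). -/
open Set Filter

/-- The reduced U(2)-invariant expander system on `(0,∞)`:
`ξ' = 1 − L1² − 2·L2²`, `L1' = 1 − ξ·L1`, `L2' = 1 − ξ·L2`. -/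
def ReducedSystem (ξ L1 L2 : ℝ → ℝ) : Prop :=
  ∀ t ∈ Ioi (0 : ℝ),
    HasDerivAt ξ (1 - (L1 t) ^ 2 - 2 * (L2 t) ^ 2) t ∧
    HasDerivAt L1 (1 - ξ t * L1 t) t ∧
    HasDerivAt L2 (1 - ξ t * L2 t) t

/-- Boundary conditions at `0` with parameter `α` for the reduced U(2)-invariant
expander system: `ξ − 1/t` and `L1 − 1/t` extend to `C¹` functions on `[0,∞)`
vanishing at `0` with derivative `2α/3 + 1` and `−α/3` respectively, and `L2`
extends to a `C¹` function on `[0,∞)` with `L2(0) = 0`, `L2'(0) = 1/2`. -/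
def ReducedBC (α : ℝ) (ξ L1 L2 : ℝ → ℝ) : Prop :=
  (∃ g : ℝ → ℝ, ContDiffOn ℝ 1 g (Ici 0) ∧ (∀ t ∈ Ioi (0 : ℝ), g t = ξ t - 1 / t) ∧
      g 0 = 0 ∧ derivWithin g (Ici 0) 0 = 2 * α / 3 + 1) ∧
  (∃ g : ℝ → ℝ, ContDiffOn ℝ 1 g (Ici 0) ∧ (∀ t ∈ Ioi (0 : ℝ), g t = L1 t - 1 / t) ∧
      g 0 = 0 ∧ derivWithin g (Ici 0) 0 = -α / 3) ∧
  (∃ g : ℝ → ℝ, ContDiffOn ℝ 1 g (Ici 0) ∧ (∀ t ∈ Ioi (0 : ℝ), g t = L2 t) ∧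
      g 0 = 0 ∧ derivWithin g (Ici 0) 0 = 1 / 2)

open MeasureTheory intervalIntegral Topology
open Set Filter MeasureTheory intervalIntegral Topology

lemma aux_Phi_hasDeriv {ξ : ℝ → ℝ} (hξ : ContinuousOn ξ (Ioi 0)) {c t : ℝ}
    (hc : 0 < c) (ht : 0 < t) :
    HasDerivAt (fun x => ∫ s in c..x, ξ s) (ξ t) t := by
  have hsub : uIcc c t ⊆ Ioi (0:ℝ) := fun x hx =>
    lt_of_lt_of_le (lt_min hc ht) hx.1
  exact integral_hasDerivAt_right ((hξ.mono hsub).intervalIntegrable)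
    (hξ.stronglyMeasurableAtFilter isOpen_Ioi t ht)
    (hξ.continuousAt (isOpen_Ioi.mem_nhds ht))

lemma prop_pos {u ξ f : ℝ → ℝ} {a b : ℝ} (ha : 0 < a) (hab : a < b)
    (hξ : ContinuousOn ξ (Ioi 0))
    (hu : ∀ t ∈ Icc a b, HasDerivAt u (f t - ξ t * u t) t)
    (hf : ∀ t ∈ Ioo a b, 0 < f t)
    (hua : 0 < u a) : 0 < u b := by
  set Φ : ℝ → ℝ := fun x => ∫ s in a..x, ξ s with hΦdef
  set F : ℝ → ℝ := fun x => u x * Real.exp (Φ x) with hFdef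
  have hFd : ∀ t ∈ Icc a b, HasDerivAt F (f t * Real.exp (Φ t)) t := by
    intro t ht
    have ht0 : 0 < t := lt_of_lt_of_le ha ht.1
    have h1 := (hu t ht).mul ((aux_Phi_hasDeriv hξ ha ht0).exp)
    refine HasDerivAt.congr_deriv h1 ?_
    ring
  have mono : StrictMonoOn F (Icc a b) := by
    apply strictMonoOn_of_deriv_pos (convex_Icc a b)
    · intro t ht; exact (hFd t ht).continuousAt.continuousWithinAt
    · intro t ht
      rw [interior_Icc] at ht
      rw [(hFd t (Ioo_subset_Icc_self ht)).deriv]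
      exact mul_pos (hf t ht) (Real.exp_pos _)
  have hlt := mono (left_mem_Icc.2 hab.le) (right_mem_Icc.2 hab.le) hab
  have hFa : F a = u a := by simp [hFdef, hΦdef, intervalIntegral.integral_same]
  have hFb : 0 < F b := by rw [hFa] at hlt; linarith
  by_contra hub
  push_neg at hub
  have : F b ≤ 0 := mul_nonpos_of_nonpos_of_nonneg hub (Real.exp_pos _).le
  linarith

lemma prop_pos_zero {u ξ f : ℝ → ℝ} {δ : ℝ} (hδ : 0 < δ)
    (hξ : ContinuousOn ξ (Ioi 0))
    (hξ0 : ∀ t ∈ Ioo (0:ℝ) δ, 0 ≤ ξ t)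
    (hu : ∀ t ∈ Ioo (0:ℝ) δ, HasDerivAt u (f t - ξ t * u t) t)
    (hf : ∀ t ∈ Ioo (0:ℝ) δ, 0 < f t)
    (hu0 : Tendsto u (𝓝[>] (0:ℝ)) (𝓝 0)) :
    ∀ t ∈ Ioo (0:ℝ) δ, 0 < u t := by
  set c : ℝ := δ/2 with hcdef
  have hc : 0 < c := by positivity
  have hcδ : c < δ := by simp [hcdef]; linarith
  set Φ : ℝ → ℝ := fun x => ∫ s in c..x, ξ s with hΦdef
  set F : ℝ → ℝ := fun x => u x * Real.exp (Φ x) with hFdef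
  have hFd : ∀ t ∈ Ioo (0:ℝ) δ, HasDerivAt F (f t * Real.exp (Φ t)) t := by
    intro t ht
    have h1 := (hu t ht).mul ((aux_Phi_hasDeriv hξ hc ht.1).exp)
    refine HasDerivAt.congr_deriv h1 ?_
    ring
  have mono : StrictMonoOn F (Ioo 0 δ) := by
    apply strictMonoOn_of_deriv_pos (convex_Ioo 0 δ)
    · intro t ht; exact (hFd t ht).continuousAt.continuousWithinAt
    · intro t ht
      rw [interior_Ioo] at ht
      rw [(hFd t ht).deriv]
      exact mul_pos (hf t ht) (Real.exp_pos _)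
  -- F tends to 0 at 0+
  have hΦle : ∀ s ∈ Ioo (0:ℝ) c, Φ s ≤ 0 := by
    intro s hs
    have h1 : Φ s = - ∫ x in s..c, ξ x := intervalIntegral.integral_symm s c
    rw [h1, neg_nonpos]
    apply intervalIntegral.integral_nonneg hs.2.le
    intro x hx
    exact hξ0 x ⟨lt_of_lt_of_le hs.1 hx.1, lt_of_le_of_lt hx.2 hcδ⟩
  have hFt : Tendsto F (𝓝[>] (0:ℝ)) (𝓝 0) := by
    apply squeeze_zero_norm' _ (by simpa using hu0.abs)
    filter_upwards [Ioo_mem_nhdsGT_of_mem (by constructor <;> [exact le_refl 0; exact hc] : (0:ℝ) ∈ Ico 0 c)] with s hs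
    have : Real.exp (Φ s) ≤ 1 := Real.exp_le_one_iff.2 (hΦle s hs)
    calc ‖F s‖ = |u s| * Real.exp (Φ s) := by
          simp [hFdef, abs_mul, abs_of_pos (Real.exp_pos _)]
      _ ≤ |u s| * 1 := by
          apply mul_le_mul_of_nonneg_left this (abs_nonneg _)
      _ = |u s| := mul_one _
  intro t ht
  have ht2 : t/2 ∈ Ioo (0:ℝ) δ := ⟨by linarith [ht.1], by linarith [ht.1, ht.2]⟩
  have h1 : F (t/2) < F t := mono ht2 ht (by linarith [ht.1])
  have h2 : (0:ℝ) ≤ F (t/2) := by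
    apply le_of_tendsto hFt
    filter_upwards [Ioo_mem_nhdsGT_of_mem (by constructor <;> [exact le_refl 0; exact ht2.1] : (0:ℝ) ∈ Ico 0 (t/2))] with s hs
    exact (mono (⟨hs.1, lt_trans hs.2 ht2.2⟩) ht2 hs.2).le
  have hFtpos : 0 < F t := lt_of_le_of_lt h2 h1
  by_contra hut
  push_neg at hut
  have : F t ≤ 0 := mul_nonpos_of_nonpos_of_nonneg hut (Real.exp_pos _).le
  linarith


lemma pos_of_right_deriv {g : ℝ → ℝ} (hg : ContDiffOn ℝ 1 g (Ici 0)) (h0 : g 0 = 0)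
    {d : ℝ} (hd : derivWithin g (Ici 0) 0 = d) (hdpos : 0 < d) :
    ∀ᶠ t in 𝓝[>] (0:ℝ), 0 < g t := by
  have hdiff : DifferentiableWithinAt ℝ g (Ici 0) 0 :=
    (hg.differentiableOn one_ne_zero) 0 Set.self_mem_Ici
  have hder : HasDerivWithinAt g d (Ici 0) 0 := by
    rw [← hd]; exact hdiff.hasDerivWithinAt
  rw [hasDerivWithinAt_iff_tendsto_slope] at hder
  have hset : Ici (0:ℝ) \ {0} = Ioi 0 := Ici_sdiff_left
  rw [hset] at hder
  have hev : ∀ᶠ t in 𝓝[>] (0:ℝ), 0 < slope g 0 t :=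
    hder (Ioi_mem_nhds hdpos)
  filter_upwards [hev, self_mem_nhdsWithin] with t hslope (htpos : t ∈ Ioi 0)
  have : slope g 0 t = g t / t := by
    simp [slope_def_field, h0]
  rw [this] at hslope
  have := mul_pos hslope (show (0:ℝ) < t from htpos)
  rwa [div_mul_cancel₀] at this
  exact ne_of_gt htpos

lemma barrier_pos {L ξL : ℝ → ℝ} {t : ℝ} (ht : 0 < t)
    (hL : HasDerivAt L (1 - ξL t * L t) t)
    (hpos : ∀ s ∈ Ioo 0 t, 0 < L s) (hge : 0 ≤ L t) : 0 < L t := by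
  rcases hge.lt_or_eq with h | h
  · exact h
  exfalso
  have hL1 : HasDerivAt L 1 t := by
    rw [← h] at hL
    simpa using hL
  have hder : HasDerivWithinAt L 1 (Iio t) t := hL1.hasDerivWithinAt
  rw [hasDerivWithinAt_iff_tendsto_slope] at hder
  have hset : Iio t \ {t} = Iio t := by
    ext x
    simp only [Set.mem_diff, Set.mem_Iio, Set.mem_singleton_iff]
    exact ⟨fun h => h.1, fun h => ⟨h, ne_of_lt h⟩⟩
  rw [hset] at hder
  have hev : ∀ᶠ s in 𝓝[<] t, slope L t s ≤ 0 := by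
    filter_upwards [Ioo_mem_nhdsLT_of_mem (⟨half_lt_self ht, le_refl t⟩ : t ∈ Ioc (t/2) t)] with s hs
    have hs' : s ∈ Ioo 0 t := ⟨lt_trans (half_pos ht) hs.1, hs.2⟩
    have hLs : 0 < L s := hpos s hs'
    have : slope L t s = L s / (s - t) := by
      simp [slope_def_field, ← h]
    rw [this]
    apply div_nonpos_of_nonneg_of_nonpos hLs.le
    linarith [hs.2]
  have : (1:ℝ) ≤ 0 := le_of_tendsto hder hev
  linarith

lemma nonneg_at {u : ℝ → ℝ} {t : ℝ} (ht : 0 < t) (hc : ContinuousAt u t)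
    (hpos : ∀ s ∈ Ioo 0 t, 0 < u s) : 0 ≤ u t := by
  have htend : Tendsto u (𝓝[<] t) (𝓝 (u t)) :=
    hc.continuousWithinAt.tendsto
  apply ge_of_tendsto htend
  filter_upwards [Ioo_mem_nhdsLT_of_mem (⟨half_lt_self ht, le_refl t⟩ : t ∈ Ioc (t/2) t)] with s hs
  exact (hpos s ⟨lt_trans (half_pos ht) hs.1, hs.2⟩).le

/-- Monotonicity in the parameter `α` for the reduced U(2)-invariant expander system. -/
theorem reduced_system_monotone_in_alpha (α₀ α₁ : ℝ) (hα : α₀ < α₁)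
    (ξ₀ L1₀ L2₀ ξ₁ L1₁ L2₁ : ℝ → ℝ)
    (hsys₀ : ReducedSystem ξ₀ L1₀ L2₀) (hbc₀ : ReducedBC α₀ ξ₀ L1₀ L2₀)
    (hsys₁ : ReducedSystem ξ₁ L1₁ L2₁) (hbc₁ : ReducedBC α₁ ξ₁ L1₁ L2₁) :
    ∀ t ∈ Ioi (0 : ℝ),
      ξ₁ t > ξ₀ t ∧ (0 < L1₁ t ∧ L1₁ t < L1₀ t) ∧ (0 < L2₁ t ∧ L2₁ t < L2₀ t) := by
  obtain ⟨⟨p0, hp0, hp0e, hp00, hp0d⟩, ⟨q0, hq0, hq0e, hq00, hq0d⟩,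
    ⟨r0, hr0, hr0e, hr00, hr0d⟩⟩ := hbc₀
  obtain ⟨⟨p1, hp1, hp1e, hp10, hp1d⟩, ⟨q1, hq1, hq1e, hq10, hq1d⟩,
    ⟨r1, hr1, hr1e, hr10, hr1d⟩⟩ := hbc₁
  set D : ℝ → ℝ := fun t => ξ₁ t - ξ₀ t with hDdef
  set M1 : ℝ → ℝ := fun t => L1₀ t - L1₁ t with hM1def
  set M2 : ℝ → ℝ := fun t => L2₀ t - L2₁ t with hM2def
  suffices h : ∀ t ∈ Ioi (0:ℝ), 0 < D t ∧ 0 < L1₁ t ∧ 0 < M1 t ∧ 0 < L2₁ t ∧ 0 < M2 t by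
    intro t ht
    obtain ⟨h1, h2, h3, h4, h5⟩ := h t ht
    simp only [hDdef, hM1def, hM2def] at h1 h3 h5
    exact ⟨by linarith, ⟨h2, by linarith⟩, h4, by linarith⟩
  -- continuity of ξ₀ on (0,∞)
  have hcξ₀ : ContinuousOn ξ₀ (Ioi 0) :=
    fun s hs => ((hsys₀ s hs).1.continuousAt).continuousWithinAt
  -- derivative identities
  have hD' : ∀ s ∈ Ioi (0:ℝ), HasDerivAt D
      (M1 s * (L1₀ s + L1₁ s) + 2 * M2 s * (L2₀ s + L2₁ s)) s := by
    intro s hs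
    have h := ((hsys₁ s hs).1).sub ((hsys₀ s hs).1)
    refine HasDerivAt.congr_deriv h ?_
    simp only [hM1def, hM2def]
    ring
  have hM1' : ∀ s ∈ Ioi (0:ℝ), HasDerivAt M1 (D s * L1₁ s - ξ₀ s * M1 s) s := by
    intro s hs
    have h := ((hsys₀ s hs).2.1).sub ((hsys₁ s hs).2.1)
    refine HasDerivAt.congr_deriv h ?_
    simp only [hDdef, hM1def]
    ring
  have hM2' : ∀ s ∈ Ioi (0:ℝ), HasDerivAt M2 (D s * L2₁ s - ξ₀ s * M2 s) s := by
    intro s hs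
    have h := ((hsys₀ s hs).2.2).sub ((hsys₁ s hs).2.2)
    refine HasDerivAt.congr_deriv h ?_
    simp only [hDdef, hM2def]
    ring
  -- near-zero eventual positivity
  have hED : ∀ᶠ s in 𝓝[>] (0:ℝ), 0 < D s := by
    have hg : ContDiffOn ℝ 1 (fun s => p1 s - p0 s) (Ici 0) := hp1.sub hp0
    have h0 : (fun s => p1 s - p0 s) 0 = 0 := by simp [hp10, hp00]
    have hdW : derivWithin (fun s => p1 s - p0 s) (Ici 0) 0 = 2*(α₁-α₀)/3 := by
      rw [derivWithin_fun_sub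
        ((hp1.differentiableOn one_ne_zero) 0 self_mem_Ici)
        ((hp0.differentiableOn one_ne_zero) 0 self_mem_Ici), hp1d, hp0d]
      ring
    filter_upwards [pos_of_right_deriv hg h0 hdW (by linarith), self_mem_nhdsWithin]
      with s h1 h2
    have e1 := hp1e s h2
    have e0 := hp0e s h2
    simp only [hDdef]
    linarith
  have hEM1 : ∀ᶠ s in 𝓝[>] (0:ℝ), 0 < M1 s := by
    have hg : ContDiffOn ℝ 1 (fun s => q0 s - q1 s) (Ici 0) := hq0.sub hq1
    have h0 : (fun s => q0 s - q1 s) 0 = 0 := by simp [hq10, hq00]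
    have hdW : derivWithin (fun s => q0 s - q1 s) (Ici 0) 0 = (α₁-α₀)/3 := by
      rw [derivWithin_fun_sub
        ((hq0.differentiableOn one_ne_zero) 0 self_mem_Ici)
        ((hq1.differentiableOn one_ne_zero) 0 self_mem_Ici), hq0d, hq1d]
      ring
    filter_upwards [pos_of_right_deriv hg h0 hdW (by linarith), self_mem_nhdsWithin]
      with s h1 h2
    have e1 := hq1e s h2
    have e0 := hq0e s h2
    simp only [hM1def]
    linarith
  have hEL2 : ∀ᶠ s in 𝓝[>] (0:ℝ), 0 < L2₁ s := by
    filter_upwards [pos_of_right_deriv hr1 hr10 hr1d (by norm_num), self_mem_nhdsWithin]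
      with s h1 h2
    rw [hr1e s h2] at h1
    exact h1
  have hEL1 : ∀ᶠ s in 𝓝[>] (0:ℝ), 0 < L1₁ s := by
    have hq1t : Tendsto q1 (𝓝[>] (0:ℝ)) (𝓝 0) := by
      have h := ((hq1.continuousOn) 0 self_mem_Ici).tendsto
      rw [hq10] at h
      exact h.mono_left (nhdsWithin_mono 0 Ioi_subset_Ici_self)
    have h1 : ∀ᶠ s in 𝓝[>] (0:ℝ), q1 s ∈ Ioo (-1:ℝ) 1 :=
      hq1t.eventually_mem (Ioo_mem_nhds (by norm_num) (by norm_num))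
    filter_upwards [h1,
      Ioo_mem_nhdsGT_of_mem (⟨le_refl 0, zero_lt_one⟩ : (0:ℝ) ∈ Ico 0 1)] with s hs1 hs2
    have e := hq1e s hs2.1
    have h2 : (1:ℝ) < 1/s := one_lt_one_div hs2.1 hs2.2
    linarith [hs1.1]
  have hEξ0 : ∀ᶠ s in 𝓝[>] (0:ℝ), 0 ≤ ξ₀ s := by
    have hp0t : Tendsto p0 (𝓝[>] (0:ℝ)) (𝓝 0) := by
      have h := ((hp0.continuousOn) 0 self_mem_Ici).tendsto
      rw [hp00] at h
      exact h.mono_left (nhdsWithin_mono 0 Ioi_subset_Ici_self)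
    have h1 : ∀ᶠ s in 𝓝[>] (0:ℝ), p0 s ∈ Ioo (-1:ℝ) 1 :=
      hp0t.eventually_mem (Ioo_mem_nhds (by norm_num) (by norm_num))
    filter_upwards [h1,
      Ioo_mem_nhdsGT_of_mem (⟨le_refl 0, zero_lt_one⟩ : (0:ℝ) ∈ Ico 0 1)] with s hs1 hs2
    have e := hp0e s hs2.1
    have h2 : (1:ℝ) < 1/s := one_lt_one_div hs2.1 hs2.2
    linarith [hs1.1]
  -- take δ
  have hall := hED.and (hEM1.and (hEL2.and (hEL1.and hEξ0)))
  obtain ⟨δ, hδmem, hδsub⟩ := mem_nhdsGT_iff_exists_Ioo_subset.1 hall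
  have hδ0 : (0:ℝ) < δ := hδmem
  -- M2 positive near zero
  have hM2t : Tendsto M2 (𝓝[>] (0:ℝ)) (𝓝 0) := by
    have hr0t : Tendsto r0 (𝓝[>] (0:ℝ)) (𝓝 0) := by
      have h := ((hr0.continuousOn) 0 self_mem_Ici).tendsto
      rw [hr00] at h
      exact h.mono_left (nhdsWithin_mono 0 Ioi_subset_Ici_self)
    have hr1t : Tendsto r1 (𝓝[>] (0:ℝ)) (𝓝 0) := by
      have h := ((hr1.continuousOn) 0 self_mem_Ici).tendsto
      rw [hr10] at h
      exact h.mono_left (nhdsWithin_mono 0 Ioi_subset_Ici_self)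
    have h := hr0t.sub hr1t
    rw [sub_zero] at h
    apply h.congr'
    filter_upwards [self_mem_nhdsWithin] with s hs
    simp only [hM2def, hr0e s hs, hr1e s hs]
  have hM2near : ∀ s ∈ Ioo (0:ℝ) δ, 0 < M2 s := by
    apply prop_pos_zero hδ0 hcξ₀
    · intro s hs; exact (hδsub hs).2.2.2.2
    · intro s hs; exact hM2' s hs.1
    · intro s hs
      exact mul_pos (hδsub hs).1 (hδsub hs).2.2.1
    · exact hM2t
  have hP0 : ∀ s ∈ Ioo (0:ℝ) δ,
      0 < D s ∧ 0 < L1₁ s ∧ 0 < M1 s ∧ 0 < L2₁ s ∧ 0 < M2 s := by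
    intro s hs
    obtain ⟨a1, a2, a3, a4, _⟩ := hδsub hs
    exact ⟨a1, a4, a2, a3, hM2near s hs⟩
  -- main argument
  intro t ht
  by_contra hnc
  set S : Set ℝ :=
    {s | 0 < s ∧ ¬ (0 < D s ∧ 0 < L1₁ s ∧ 0 < M1 s ∧ 0 < L2₁ s ∧ 0 < M2 s)} with hSdef
  have hSne : S.Nonempty := ⟨t, ht, hnc⟩
  have hlb : ∀ s ∈ S, δ ≤ s := by
    intro s hs
    by_contra hlt
    push_neg at hlt
    exact hs.2 (hP0 s ⟨hs.1, hlt⟩)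
  have hbdd : BddBelow S := ⟨δ, hlb⟩
  set τ := sInf S with hτdef
  have hδτ : δ ≤ τ := le_csInf hSne hlb
  have hτ0 : (0:ℝ) < τ := lt_of_lt_of_le hδ0 hδτ
  have hτmem : τ ∈ Ioi (0:ℝ) := hτ0
  have hPlt : ∀ s ∈ Ioo (0:ℝ) τ,
      0 < D s ∧ 0 < L1₁ s ∧ 0 < M1 s ∧ 0 < L2₁ s ∧ 0 < M2 s := by
    intro s hs
    by_contra hns
    exact absurd (csInf_le hbdd ⟨hs.1, hns⟩) (not_le.2 hs.2)
  have hδ2mem : δ/2 ∈ Ioo (0:ℝ) δ := ⟨by linarith, by linarith⟩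
  have hδ2τ : δ/2 < τ := by linarith
  -- strict positivity at τ
  have hL1τ : 0 < L1₁ τ := by
    apply barrier_pos hτ0 ((hsys₁ τ hτmem).2.1) (fun s hs => (hPlt s hs).2.1)
    exact nonneg_at hτ0 ((hsys₁ τ hτmem).2.1).continuousAt (fun s hs => (hPlt s hs).2.1)
  have hL2τ : 0 < L2₁ τ := by
    apply barrier_pos hτ0 ((hsys₁ τ hτmem).2.2) (fun s hs => (hPlt s hs).2.2.2.1)
    exact nonneg_at hτ0 ((hsys₁ τ hτmem).2.2).continuousAt (fun s hs => (hPlt s hs).2.2.2.1)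
  have hIccsub : Icc (δ/2) τ ⊆ Ioi (0:ℝ) := fun s hs => lt_of_lt_of_le hδ2mem.1 hs.1
  have hIoosub : Ioo (δ/2) τ ⊆ Ioo (0:ℝ) τ := fun s hs => ⟨lt_trans hδ2mem.1 hs.1, hs.2⟩
  have hM1τ : 0 < M1 τ := by
    apply prop_pos hδ2mem.1 hδ2τ hcξ₀ (fun s hs => hM1' s (hIccsub hs))
      (fun s hs => mul_pos (hPlt s (hIoosub hs)).1 (hPlt s (hIoosub hs)).2.1)
    exact (hP0 (δ/2) hδ2mem).2.2.1
  have hM2τ : 0 < M2 τ := by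
    apply prop_pos hδ2mem.1 hδ2τ hcξ₀ (fun s hs => hM2' s (hIccsub hs))
      (fun s hs => mul_pos (hPlt s (hIoosub hs)).1 (hPlt s (hIoosub hs)).2.2.2.1)
    exact (hP0 (δ/2) hδ2mem).2.2.2.2
  have hDτ : 0 < D τ := by
    apply prop_pos (ξ := fun _ => (0:ℝ))
      (f := fun s => M1 s * (L1₀ s + L1₁ s) + 2 * M2 s * (L2₀ s + L2₁ s))
      hδ2mem.1 hδ2τ continuous_const.continuousOn
    · intro s hs
      have h := hD' s (hIccsub hs)
      convert h using 1
      ring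
    · intro s hs
      obtain ⟨_, hb, hc, hd, he⟩ := hPlt s (hIoosub hs)
      have e1 : L1₀ s + L1₁ s = M1 s + 2 * L1₁ s := by simp only [hM1def]; ring
      have e2 : L2₀ s + L2₁ s = M2 s + 2 * L2₁ s := by simp only [hM2def]; ring
      rw [e1, e2]
      nlinarith [mul_pos hc hc, mul_pos hc hb, mul_pos he he, mul_pos he hd]
    · exact (hP0 (δ/2) hδ2mem).1
  -- openness: the conditions hold near τ, contradicting τ = inf of failures
  have hPev : ∀ᶠ s in 𝓝 τ,
      0 < s ∧ 0 < D s ∧ 0 < L1₁ s ∧ 0 < M1 s ∧ 0 < L2₁ s ∧ 0 < M2 s := by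
    have h0 : ∀ᶠ s in 𝓝 τ, 0 < s := eventually_gt_nhds hτ0
    have h1 := (hD' τ hτmem).continuousAt.eventually (eventually_gt_nhds hDτ)
    have h2 := ((hsys₁ τ hτmem).2.1).continuousAt.eventually (eventually_gt_nhds hL1τ)
    have h3 := (hM1' τ hτmem).continuousAt.eventually (eventually_gt_nhds hM1τ)
    have h4 := ((hsys₁ τ hτmem).2.2).continuousAt.eventually (eventually_gt_nhds hL2τ)
    have h5 := (hM2' τ hτmem).continuousAt.eventually (eventually_gt_nhds hM2τ)
    filter_upwards [h0, h1, h2, h3, h4, h5] with s a0 a1 a2 a3 a4 a5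
    exact ⟨a0, a1, a2, a3, a4, a5⟩
  rw [Metric.eventually_nhds_iff] at hPev
  obtain ⟨ε, hε, hball⟩ := hPev
  obtain ⟨s, hsS, hsl⟩ := exists_lt_of_csInf_lt hSne (lt_add_of_pos_right τ hε)
  have hτs : τ ≤ s := csInf_le hbdd hsS
  have hdist : dist s τ < ε := by
    rw [Real.dist_eq, abs_of_nonneg (by linarith)]
    linarith
  exact hsS.2 (hball hdist).2
end

section
/- The explicit functions ξ(t) = √3·(e^{2√3 t} + 1)/(e^{2√3 t} − 1), L1(t) = (1/√3)·(e^{2√3 t} + 4e^{√3 t} + 1)/(e^{2√3 t} − 1), and L2(t) = (1/√3)·(e^{√3 t} − 1)/(e^{√3 t} + 1), defined for t ∈ (0,∞), solve the reduced U(2)-invariant expander system and satisfy the boundary conditions at 0 with parameter α = 0; moreover ξ(t) → √3, L1(t) → 1/√3 and L2(t) → 1/√3 as t → ∞. -/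
open Set Filter

/-- The explicit Einstein (`α = 0`) solution of the reduced U(2)-invariant
expander system. -/
noncomputable def ξE : ℝ → ℝ := fun t =>
  Real.sqrt 3 * (Real.exp (2 * Real.sqrt 3 * t) + 1) / (Real.exp (2 * Real.sqrt 3 * t) - 1)

noncomputable def L1E : ℝ → ℝ := fun t =>
  (1 / Real.sqrt 3) *
    (Real.exp (2 * Real.sqrt 3 * t) + 4 * Real.exp (Real.sqrt 3 * t) + 1) /
      (Real.exp (2 * Real.sqrt 3 * t) - 1)

noncomputable def L2E : ℝ → ℝ := fun t =>
  (1 / Real.sqrt 3) * (Real.exp (Real.sqrt 3 * t) - 1) / (Real.exp (Real.sqrt 3 * t) + 1)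



open Set Filter Real Topology


noncomputable def q3 : ℝ := Real.sqrt 3
lemma q3_pos : 0 < q3 := Real.sqrt_pos.mpr (by norm_num)
lemma q3_ne : q3 ≠ 0 := ne_of_gt q3_pos
lemma q3_sq : q3 ^ 2 = 3 := Real.sq_sqrt (by norm_num)

noncomputable def ee : ℝ → ℝ := fun t => Real.exp (q3 * t)
lemma ee_pos (t : ℝ) : 0 < ee t := Real.exp_pos _
lemma hee (t : ℝ) : HasDerivAt ee (q3 * ee t) t := by
  unfold ee
  have h := ((hasDerivAt_id t).const_mul q3).exp
  simp only [mul_one, id] at h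
  convert h using 1; ring
lemma ee_gt_one {t : ℝ} (ht : 0 < t) : 1 < ee t := by
  simpa [ee] using Real.one_lt_exp_iff.mpr (mul_pos q3_pos ht)
lemma ee_zero : ee 0 = 1 := by simp [ee]

noncomputable def EE : ℝ → ℝ := fun t => Real.exp (2 * q3 * t)
lemma EE_pos (t : ℝ) : 0 < EE t := Real.exp_pos _
lemma hEE (t : ℝ) : HasDerivAt EE (2 * q3 * EE t) t := by
  unfold EE
  have h := ((hasDerivAt_id t).const_mul (2 * q3)).exp
  simp only [mul_one, id] at h
  convert h using 1; ring
lemma EE_gt_one {t : ℝ} (ht : 0 < t) : 1 < EE t := by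
  simpa [EE] using Real.one_lt_exp_iff.mpr (by nlinarith [q3_pos])
lemma EE_zero : EE 0 = 1 := by simp [EE]
lemma EE_eq_sq (t : ℝ) : EE t = ee t ^ 2 := by
  simp [EE, ee, ← Real.exp_nat_mul, ← Real.exp_add]; ring_nf

-- L'Hopital step lemma
lemma key {f f' : ℝ → ℝ} (hf : ∀ t, HasDerivAt f (f' t) t) (h0 : f 0 = 0)
    {n : ℕ} {c : ℝ} (h : Tendsto (fun t => f' t / t ^ n) (𝓝[>] 0) (𝓝 c)) :
    Tendsto (fun t => f t / t ^ (n + 1)) (𝓝[>] 0) (𝓝 (c / (n + 1))) := by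
  apply HasDerivAt.lhopital_zero_right_on_Ioo (f' := f') (g' := fun t => (n + 1 : ℝ) * t ^ n)
    (a := 0) (b := 1) one_pos
  · exact fun x _ => hf x
  · intro x _
    simpa using hasDerivAt_pow (n + 1) x
  · intro x hx
    have : (0 : ℝ) < x := hx.1
    positivity
  · have := (hf 0).continuousAt.tendsto
    rw [h0] at this
    exact this.mono_left nhdsWithin_le_nhds
  · have : Tendsto (fun t : ℝ => t ^ (n + 1)) (𝓝 0) (𝓝 ((0:ℝ) ^ (n+1))) :=
      (continuous_pow (n + 1)).tendsto 0
    simpa using this.mono_left nhdsWithin_le_nhds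
  · have h2 := h.div_const (n + 1 : ℝ)
    apply h2.congr
    intro x
    rw [div_div, mul_comm]

lemma base {f : ℝ → ℝ} (hf : Continuous f) {c : ℝ} (hc : f 0 = c) :
    Tendsto (fun t => f t / t ^ 0) (𝓝[>] 0) (𝓝 c) := by
  simp only [pow_zero, div_one]
  have := hf.tendsto 0
  rw [hc] at this
  exact this.mono_left nhdsWithin_le_nhds

lemma contEE : Continuous EE := by unfold EE; continuity
lemma contee : Continuous ee := by unfold ee; continuity
attribute [fun_prop] contEE contee

-- ξ boundary condition machinery
noncomputable def Nf : ℝ → ℝ := fun t => q3 * t * (EE t + 1) - (EE t - 1)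
noncomputable def Nf1 : ℝ → ℝ := fun t => q3 * (EE t + 1) + 2 * q3 ^ 2 * t * EE t - 2 * q3 * EE t
noncomputable def Nf2 : ℝ → ℝ := fun t => 4 * q3 ^ 3 * t * EE t
noncomputable def Nf3 : ℝ → ℝ := fun t => 4 * q3 ^ 3 * EE t + 8 * q3 ^ 4 * t * EE t
noncomputable def Df : ℝ → ℝ := fun t => t * (EE t - 1)
noncomputable def Df1 : ℝ → ℝ := fun t => (EE t - 1) + 2 * q3 * t * EE t
noncomputable def Df2 : ℝ → ℝ := fun t => 4 * q3 * EE t + 4 * q3 ^ 2 * t * EE t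

lemma hNf (t : ℝ) : HasDerivAt Nf (Nf1 t) t := by
  unfold Nf Nf1
  have h := (((hasDerivAt_id t).const_mul q3).mul ((hEE t).add_const 1)).sub ((hEE t).sub_const 1)
  refine h.congr_deriv (Eq.symm ?_); simp only [id_eq]; ring
lemma hNf1 (t : ℝ) : HasDerivAt Nf1 (Nf2 t) t := by
  unfold Nf1 Nf2
  have h := ((((hEE t).add_const 1).const_mul q3).add
    ((((hasDerivAt_id t).const_mul (2 * q3 ^ 2)).mul (hEE t)))).sub ((hEE t).const_mul (2 * q3))
  refine h.congr_deriv (Eq.symm ?_); simp only [id_eq]; ring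
lemma hNf2 (t : ℝ) : HasDerivAt Nf2 (Nf3 t) t := by
  unfold Nf2 Nf3
  have h := ((hasDerivAt_id t).const_mul (4 * q3 ^ 3)).mul (hEE t)
  refine h.congr_deriv (Eq.symm ?_); simp only [id_eq]; ring
lemma hDf (t : ℝ) : HasDerivAt Df (Df1 t) t := by
  unfold Df Df1
  have h := (hasDerivAt_id t).mul ((hEE t).sub_const 1)
  refine h.congr_deriv (Eq.symm ?_); simp only [id_eq]; ring
lemma hDf1 (t : ℝ) : HasDerivAt Df1 (Df2 t) t := by
  unfold Df1 Df2
  have h := ((hEE t).sub_const 1).add (((hasDerivAt_id t).const_mul (2 * q3)).mul (hEE t))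
  refine h.congr_deriv (Eq.symm ?_); simp only [id_eq]; ring

lemma q3_cube : q3 ^ 3 = 3 * q3 := by rw [pow_succ, q3_sq]

lemma limNf3 : Tendsto (fun t => Nf3 t / t ^ 0) (𝓝[>] 0) (𝓝 (4 * q3 ^ 3)) :=
  base (by unfold Nf3; fun_prop) (by simp [Nf3, EE_zero])
lemma limNf2 : Tendsto (fun t => Nf2 t / t ^ 1) (𝓝[>] 0) (𝓝 (4 * q3 ^ 3)) := by
  have h := key hNf2 (by simp [Nf2]) limNf3
  simpa using h
lemma limNf1 : Tendsto (fun t => Nf1 t / t ^ 2) (𝓝[>] 0) (𝓝 (6 * q3)) := by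
  have h := key hNf1 (by simp [Nf1, EE_zero]; ring) limNf2
  have e : 4 * q3 ^ 3 / ((1:ℕ) + 1 : ℝ) = 6 * q3 := by rw [q3_cube]; push_cast; ring
  rwa [e] at h
lemma limNf : Tendsto (fun t => Nf t / t ^ 3) (𝓝[>] 0) (𝓝 (2 * q3)) := by
  have h := key hNf (by simp [Nf, EE_zero]) limNf1
  have e : 6 * q3 / ((2:ℕ) + 1 : ℝ) = 2 * q3 := by push_cast; ring
  rwa [e] at h
lemma limDf2 : Tendsto (fun t => Df2 t / t ^ 0) (𝓝[>] 0) (𝓝 (4 * q3)) :=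
  base (by unfold Df2; fun_prop) (by simp [Df2, EE_zero])
lemma limDf1 : Tendsto (fun t => Df1 t / t ^ 1) (𝓝[>] 0) (𝓝 (4 * q3)) := by
  have h := key hDf1 (by simp [Df1, EE_zero]) limDf2
  simpa using h
lemma limDf : Tendsto (fun t => Df t / t ^ 2) (𝓝[>] 0) (𝓝 (2 * q3)) := by
  have h := key hDf (by simp [Df]) limDf1
  have e : 4 * q3 / ((1:ℕ) + 1 : ℝ) = 2 * q3 := by push_cast; ring
  rwa [e] at h

lemma ξE_eq (t : ℝ) : ξE t = q3 * (EE t + 1) / (EE t - 1) := rfl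
lemma L1E_eq (t : ℝ) : L1E t = (1 / q3) * (EE t + 4 * ee t + 1) / (EE t - 1) := rfl
lemma L2E_eq (t : ℝ) : L2E t = (1 / q3) * (ee t - 1) / (ee t + 1) := rfl

lemma EE_sub_one_pos {t : ℝ} (ht : 0 < t) : 0 < EE t - 1 := sub_pos.mpr (EE_gt_one ht)
lemma EE_sub_one_ne {t : ℝ} (ht : 0 < t) : EE t - 1 ≠ 0 := ne_of_gt (EE_sub_one_pos ht)

noncomputable def gξ : ℝ → ℝ := fun t => if t ≤ 0 then 0 else ξE t - 1 / t

lemma gξ_pos {t : ℝ} (ht : 0 < t) : gξ t = ξE t - 1 / t := if_neg (not_le.mpr ht)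
lemma gξ_zero : gξ 0 = 0 := if_pos le_rfl

lemma gξ_eq {t : ℝ} (ht : 0 < t) : gξ t = Nf t / Df t := by
  rw [gξ_pos ht, ξE_eq]
  unfold Nf Df
  field_simp [EE_sub_one_ne ht, ne_of_gt ht]

lemma Df_pos {t : ℝ} (ht : 0 < t) : 0 < Df t := mul_pos ht (EE_sub_one_pos ht)
lemma Df_ne {t : ℝ} (ht : 0 < t) : Df t ≠ 0 := ne_of_gt (Df_pos ht)

lemma tendsto_id_right : Tendsto (fun t : ℝ => t) (𝓝[>] 0) (𝓝 0) :=
  tendsto_id.mono_left nhdsWithin_le_nhds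

lemma limgξ : Tendsto gξ (𝓝[>] 0) (𝓝 0) := by
  have h : Tendsto (fun t => Nf t / t ^ 3 * t / (Df t / t ^ 2)) (𝓝[>] 0)
      (𝓝 (2 * q3 * 0 / (2 * q3))) :=
    (limNf.mul tendsto_id_right).div limDf (mul_ne_zero two_ne_zero q3_ne)
  rw [show 2 * q3 * 0 / (2 * q3) = 0 by ring] at h
  apply h.congr'
  filter_upwards [self_mem_nhdsWithin] with t (ht : 0 < t)
  rw [gξ_eq ht]
  field_simp [ne_of_gt ht, Df_ne ht]

lemma limgξ_slope : Tendsto (fun t => gξ t / t) (𝓝[>] 0) (𝓝 1) := by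
  have h : Tendsto (fun t => Nf t / t ^ 3 / (Df t / t ^ 2)) (𝓝[>] 0)
      (𝓝 (2 * q3 / (2 * q3))) := limNf.div limDf (mul_ne_zero two_ne_zero q3_ne)
  rw [div_self (mul_ne_zero two_ne_zero q3_ne)] at h
  apply h.congr'
  filter_upwards [self_mem_nhdsWithin] with t (ht : 0 < t)
  rw [gξ_eq ht]
  field_simp [ne_of_gt ht, Df_ne ht]

lemma hdgξ {t : ℝ} (ht : 0 < t) :
    HasDerivAt gξ ((Nf1 t * Df t - Nf t * Df1 t) / Df t ^ 2) t := by
  have h := (hNf t).div (hDf t) (Df_ne ht)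
  apply h.congr_of_eventuallyEq
  filter_upwards [isOpen_Ioi.mem_nhds ht] with x (hx : 0 < x)
  exact gξ_eq hx

lemma limdgξ : Tendsto (fun t => (Nf1 t * Df t - Nf t * Df1 t) / Df t ^ 2) (𝓝[>] 0) (𝓝 1) := by
  have h : Tendsto (fun t => ((Nf1 t / t ^ 2) * (Df t / t ^ 2) - (Nf t / t ^ 3) * (Df1 t / t)) /
      (Df t / t ^ 2) ^ 2) (𝓝[>] 0)
      (𝓝 ((6 * q3 * (2 * q3) - 2 * q3 * (4 * q3)) / (2 * q3) ^ 2)) := by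
    refine Tendsto.div ((limNf1.mul limDf).sub (limNf.mul ?_)) (limDf.pow 2)
      (pow_ne_zero 2 (mul_ne_zero two_ne_zero q3_ne))
    simpa using limDf1
  rw [show (6 * q3 * (2 * q3) - 2 * q3 * (4 * q3)) / (2 * q3) ^ 2 = 1 by
    rw [div_eq_one_iff_eq (pow_ne_zero 2 (mul_ne_zero two_ne_zero q3_ne))]
    nlinarith [q3_sq]] at h
  apply h.congr'
  filter_upwards [self_mem_nhdsWithin] with t (ht : 0 < t)
  have h1 : t ≠ 0 := ne_of_gt ht
  field_simp [h1, Df_ne ht]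

lemma hdwξ0 : HasDerivWithinAt gξ 1 (Ici 0) 0 := by
  rw [hasDerivWithinAt_iff_tendsto_slope, Ici_sdiff_left]
  apply limgξ_slope.congr'
  filter_upwards [self_mem_nhdsWithin] with t (ht : 0 < t)
  rw [slope_def_field, gξ_zero, sub_zero, sub_zero]

lemma dwξ_pos {t : ℝ} (ht : 0 < t) :
    derivWithin gξ (Ici 0) t = (Nf1 t * Df t - Nf t * Df1 t) / Df t ^ 2 :=
  (hdgξ ht).hasDerivWithinAt.derivWithin (uniqueDiffOn_Ici 0 t (le_of_lt ht))

lemma dwξ_zero : derivWithin gξ (Ici 0) 0 = 1 :=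
  hdwξ0.derivWithin (uniqueDiffOn_Ici 0 0 self_mem_Ici)

lemma contNf : Continuous Nf := by unfold Nf; fun_prop
lemma contNf1 : Continuous Nf1 := by unfold Nf1; fun_prop
lemma contDf : Continuous Df := by unfold Df; fun_prop
lemma contDf1 : Continuous Df1 := by unfold Df1; fun_prop

lemma nhdsIci : 𝓝[Ici (0:ℝ)] 0 = pure 0 ⊔ 𝓝[>] 0 := by
  rw [← Ioi_insert, nhdsWithin_insert]

lemma contdwξ : ContinuousOn (derivWithin gξ (Ici 0)) (Ici 0) := by
  intro t ht
  rcases eq_or_lt_of_le (Set.mem_Ici.mp ht) with rfl | ht'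
  · unfold ContinuousWithinAt
    rw [dwξ_zero, nhdsIci, tendsto_sup]
    constructor
    · have := tendsto_pure_nhds (derivWithin gξ (Ici 0)) 0
      rwa [dwξ_zero] at this
    · apply limdgξ.congr'
      filter_upwards [self_mem_nhdsWithin] with x (hx : 0 < x)
      exact (dwξ_pos hx).symm
  · have hcont : ContinuousAt (fun t => (Nf1 t * Df t - Nf t * Df1 t) / Df t ^ 2) t := by
      apply ContinuousAt.div
      · exact ((contNf1.mul contDf).sub (contNf.mul contDf1)).continuousAt
      · exact (contDf.pow 2).continuousAt
      · exact pow_ne_zero 2 (Df_ne ht')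
    have heq : (fun t => (Nf1 t * Df t - Nf t * Df1 t) / Df t ^ 2) =ᶠ[𝓝 t]
        derivWithin gξ (Ici 0) := by
      filter_upwards [isOpen_Ioi.mem_nhds ht'] with x (hx : 0 < x)
      exact (dwξ_pos hx).symm
    exact (hcont.congr heq).continuousWithinAt

lemma contDiffξ : ContDiffOn ℝ 1 gξ (Ici 0) := by
  rw [show (1 : WithTop ℕ∞) = 0 + 1 from by norm_num,
    contDiffOn_succ_iff_derivWithin (uniqueDiffOn_Ici (0:ℝ))]
  refine ⟨?_, ?_, ?_⟩
  · intro t ht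
    rcases eq_or_lt_of_le (Set.mem_Ici.mp ht) with rfl | ht'
    · exact hdwξ0.differentiableWithinAt
    · exact (hdgξ ht').differentiableAt.differentiableWithinAt
  · intro h; simp at h
  · rw [contDiffOn_zero]
    exact contdwξ

-- L1 boundary condition machinery
noncomputable def Pf : ℝ → ℝ := fun t => t * (EE t + 4 * ee t + 1) - q3 * (EE t - 1)
noncomputable def Pf1 : ℝ → ℝ := fun t =>
  (EE t + 4 * ee t + 1) + t * (2 * q3 * EE t + 4 * q3 * ee t) - 2 * q3 ^ 2 * EE t
noncomputable def Pf2 : ℝ → ℝ := fun t =>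
  2 * (2 * q3 * EE t + 4 * q3 * ee t) + 4 * q3 ^ 2 * t * (EE t + ee t) - 4 * q3 ^ 3 * EE t
noncomputable def Pf3 : ℝ → ℝ := fun t =>
  12 * q3 ^ 2 * (EE t + ee t) + 4 * q3 ^ 3 * t * (2 * EE t + ee t) - 8 * q3 ^ 4 * EE t
noncomputable def Pf4 : ℝ → ℝ := fun t =>
  16 * q3 ^ 3 * (2 * EE t + ee t) + 4 * q3 ^ 4 * t * (4 * EE t + ee t) - 16 * q3 ^ 5 * EE t
noncomputable def Qf : ℝ → ℝ := fun t => q3 * t * (EE t - 1)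
noncomputable def Qf1 : ℝ → ℝ := fun t => q3 * (EE t - 1) + 2 * q3 ^ 2 * t * EE t
noncomputable def Qf2 : ℝ → ℝ := fun t => 4 * q3 ^ 2 * EE t + 4 * q3 ^ 3 * t * EE t

lemma hPf (t : ℝ) : HasDerivAt Pf (Pf1 t) t := by
  unfold Pf Pf1
  have h := ((hasDerivAt_id t).mul (((hEE t).add ((hee t).const_mul 4)).add_const 1)).sub
    (((hEE t).sub_const 1).const_mul q3)
  refine h.congr_deriv (Eq.symm ?_); simp only [id_eq, Pi.add_apply]; ring
lemma hPf1 (t : ℝ) : HasDerivAt Pf1 (Pf2 t) t := by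
  unfold Pf1 Pf2
  have h := ((((hEE t).add ((hee t).const_mul 4)).add_const 1).add
    ((hasDerivAt_id t).mul (((hEE t).const_mul (2 * q3)).add ((hee t).const_mul (4 * q3))))).sub
    ((hEE t).const_mul (2 * q3 ^ 2))
  refine h.congr_deriv (Eq.symm ?_); simp only [id_eq, Pi.add_apply]; ring
lemma hPf2 (t : ℝ) : HasDerivAt Pf2 (Pf3 t) t := by
  unfold Pf2 Pf3
  have h := (((((hEE t).const_mul (2 * q3)).add ((hee t).const_mul (4 * q3))).const_mul 2).add
    (((hasDerivAt_id t).const_mul (4 * q3 ^ 2)).mul ((hEE t).add (hee t)))).sub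
    ((hEE t).const_mul (4 * q3 ^ 3))
  refine h.congr_deriv (Eq.symm ?_); simp only [id_eq, Pi.add_apply]; ring
lemma hPf3 (t : ℝ) : HasDerivAt Pf3 (Pf4 t) t := by
  unfold Pf3 Pf4
  have h := ((((hEE t).add (hee t)).const_mul (12 * q3 ^ 2)).add
    (((hasDerivAt_id t).const_mul (4 * q3 ^ 3)).mul (((hEE t).const_mul 2).add (hee t)))).sub
    ((hEE t).const_mul (8 * q3 ^ 4))
  refine h.congr_deriv (Eq.symm ?_); simp only [id_eq, Pi.add_apply]; ring
lemma hQf (t : ℝ) : HasDerivAt Qf (Qf1 t) t := by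
  unfold Qf Qf1
  have h := (((hasDerivAt_id t).const_mul q3).mul ((hEE t).sub_const 1))
  refine h.congr_deriv (Eq.symm ?_); simp only [id_eq]; ring
lemma hQf1 (t : ℝ) : HasDerivAt Qf1 (Qf2 t) t := by
  unfold Qf1 Qf2
  have h := (((hEE t).sub_const 1).const_mul q3).add
    (((hasDerivAt_id t).const_mul (2 * q3 ^ 2)).mul (hEE t))
  refine h.congr_deriv (Eq.symm ?_); simp only [id_eq]; ring

lemma q3_p4 : q3 ^ 4 = 9 := by rw [show 4 = 2*2 from rfl, pow_mul, q3_sq]; norm_num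
lemma q3_p5 : q3 ^ 5 = 9 * q3 := by rw [show 5 = 4+1 from rfl, pow_succ, q3_p4]

lemma limPf4 : Tendsto (fun t => Pf4 t / t ^ 0) (𝓝[>] 0) (𝓝 0) :=
  base (by unfold Pf4; fun_prop)
    (by simp [Pf4, EE_zero, ee_zero]; nlinarith [q3_cube, q3_p5])
lemma limPf3' : Tendsto (fun t => Pf3 t / t ^ 1) (𝓝[>] 0) (𝓝 0) := by
  have h := key hPf3 (by simp [Pf3, EE_zero, ee_zero]; nlinarith [q3_sq, q3_p4]) limPf4
  simpa using h
lemma limPf2' : Tendsto (fun t => Pf2 t / t ^ 2) (𝓝[>] 0) (𝓝 0) := by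
  have h := key hPf2 (by simp [Pf2, EE_zero, ee_zero]; nlinarith [q3_cube]) limPf3'
  simpa using h
lemma limPf1' : Tendsto (fun t => Pf1 t / t ^ 3) (𝓝[>] 0) (𝓝 0) := by
  have h := key hPf1 (by simp [Pf1, EE_zero, ee_zero]; nlinarith [q3_sq]) limPf2'
  simpa using h
lemma limPf' : Tendsto (fun t => Pf t / t ^ 4) (𝓝[>] 0) (𝓝 0) := by
  have h := key hPf (by simp [Pf, EE_zero]) limPf1'
  simpa using h
lemma limQf2 : Tendsto (fun t => Qf2 t / t ^ 0) (𝓝[>] 0) (𝓝 12) :=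
  base (by unfold Qf2; fun_prop) (by simp [Qf2, EE_zero]; nlinarith [q3_sq])
lemma limQf1 : Tendsto (fun t => Qf1 t / t ^ 1) (𝓝[>] 0) (𝓝 12) := by
  have h := key hQf1 (by simp [Qf1, EE_zero]) limQf2
  simpa using h
lemma limQf : Tendsto (fun t => Qf t / t ^ 2) (𝓝[>] 0) (𝓝 6) := by
  have h := key hQf (by simp [Qf]) limQf1
  have e : (12 : ℝ) / ((1:ℕ) + 1 : ℝ) = 6 := by norm_num
  rwa [e] at h

noncomputable def gL1 : ℝ → ℝ := fun t => if t ≤ 0 then 0 else L1E t - 1 / t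

lemma gL1_pos {t : ℝ} (ht : 0 < t) : gL1 t = L1E t - 1 / t := if_neg (not_le.mpr ht)
lemma gL1_zero : gL1 0 = 0 := if_pos le_rfl

lemma Qf_pos {t : ℝ} (ht : 0 < t) : 0 < Qf t := mul_pos (mul_pos q3_pos ht) (EE_sub_one_pos ht)
lemma Qf_ne {t : ℝ} (ht : 0 < t) : Qf t ≠ 0 := ne_of_gt (Qf_pos ht)

lemma gL1_eq {t : ℝ} (ht : 0 < t) : gL1 t = Pf t / Qf t := by
  rw [gL1_pos ht, L1E_eq]
  unfold Pf Qf
  field_simp [EE_sub_one_ne ht, ne_of_gt ht, q3_ne]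

lemma limgL1 : Tendsto gL1 (𝓝[>] 0) (𝓝 0) := by
  have h : Tendsto (fun t => Pf t / t ^ 4 * t ^ 2 / (Qf t / t ^ 2)) (𝓝[>] 0)
      (𝓝 (0 * 0 ^ 2 / 6)) :=
    (limPf'.mul (tendsto_id_right.pow 2)).div limQf (by norm_num)
  rw [show (0:ℝ) * 0 ^ 2 / 6 = 0 by ring] at h
  apply h.congr'
  filter_upwards [self_mem_nhdsWithin] with t (ht : 0 < t)
  rw [gL1_eq ht]
  field_simp [ne_of_gt ht, Qf_ne ht]

lemma limgL1_slope : Tendsto (fun t => gL1 t / t) (𝓝[>] 0) (𝓝 0) := by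
  have h : Tendsto (fun t => Pf t / t ^ 4 * t / (Qf t / t ^ 2)) (𝓝[>] 0)
      (𝓝 (0 * 0 / 6)) :=
    (limPf'.mul tendsto_id_right).div limQf (by norm_num)
  rw [show (0:ℝ) * 0 / 6 = 0 by ring] at h
  apply h.congr'
  filter_upwards [self_mem_nhdsWithin] with t (ht : 0 < t)
  rw [gL1_eq ht]
  field_simp [ne_of_gt ht, Qf_ne ht]

lemma hdgL1 {t : ℝ} (ht : 0 < t) :
    HasDerivAt gL1 ((Pf1 t * Qf t - Pf t * Qf1 t) / Qf t ^ 2) t := by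
  have h := (hPf t).div (hQf t) (Qf_ne ht)
  apply h.congr_of_eventuallyEq
  filter_upwards [isOpen_Ioi.mem_nhds ht] with x (hx : 0 < x)
  exact gL1_eq hx

lemma limdgL1 : Tendsto (fun t => (Pf1 t * Qf t - Pf t * Qf1 t) / Qf t ^ 2) (𝓝[>] 0) (𝓝 0) := by
  have h : Tendsto (fun t =>
      t * ((Pf1 t / t ^ 3) * (Qf t / t ^ 2) - (Pf t / t ^ 4) * (Qf1 t / t)) / (Qf t / t ^ 2) ^ 2)
      (𝓝[>] 0) (𝓝 (0 * (0 * 6 - 0 * 12) / 6 ^ 2)) := by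
    refine Tendsto.div (tendsto_id_right.mul ((limPf1'.mul limQf).sub (limPf'.mul ?_)))
      (limQf.pow 2) (by norm_num)
    simpa using limQf1
  rw [show (0:ℝ) * (0 * 6 - 0 * 12) / 6 ^ 2 = 0 by ring] at h
  apply h.congr'
  filter_upwards [self_mem_nhdsWithin] with t (ht : 0 < t)
  have h1 : t ≠ 0 := ne_of_gt ht
  field_simp [h1, Qf_ne ht]

lemma hdwL10 : HasDerivWithinAt gL1 0 (Ici 0) 0 := by
  rw [hasDerivWithinAt_iff_tendsto_slope, Ici_sdiff_left]
  apply limgL1_slope.congr'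
  filter_upwards [self_mem_nhdsWithin] with t (ht : 0 < t)
  rw [slope_def_field, gL1_zero, sub_zero, sub_zero]

lemma dwL1_pos {t : ℝ} (ht : 0 < t) :
    derivWithin gL1 (Ici 0) t = (Pf1 t * Qf t - Pf t * Qf1 t) / Qf t ^ 2 :=
  (hdgL1 ht).hasDerivWithinAt.derivWithin (uniqueDiffOn_Ici 0 t (le_of_lt ht))

lemma dwL1_zero : derivWithin gL1 (Ici 0) 0 = 0 :=
  hdwL10.derivWithin (uniqueDiffOn_Ici 0 0 self_mem_Ici)

lemma contPf : Continuous Pf := by unfold Pf; fun_prop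
lemma contPf1 : Continuous Pf1 := by unfold Pf1; fun_prop
lemma contQf : Continuous Qf := by unfold Qf; fun_prop
lemma contQf1 : Continuous Qf1 := by unfold Qf1; fun_prop

lemma contdwL1 : ContinuousOn (derivWithin gL1 (Ici 0)) (Ici 0) := by
  intro t ht
  rcases eq_or_lt_of_le (Set.mem_Ici.mp ht) with rfl | ht'
  · unfold ContinuousWithinAt
    rw [dwL1_zero, nhdsIci, tendsto_sup]
    constructor
    · have := tendsto_pure_nhds (derivWithin gL1 (Ici 0)) 0
      rwa [dwL1_zero] at this
    · apply limdgL1.congr'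
      filter_upwards [self_mem_nhdsWithin] with x (hx : 0 < x)
      exact (dwL1_pos hx).symm
  · have hcont : ContinuousAt (fun t => (Pf1 t * Qf t - Pf t * Qf1 t) / Qf t ^ 2) t := by
      apply ContinuousAt.div
      · exact ((contPf1.mul contQf).sub (contPf.mul contQf1)).continuousAt
      · exact (contQf.pow 2).continuousAt
      · exact pow_ne_zero 2 (Qf_ne ht')
    have heq : (fun t => (Pf1 t * Qf t - Pf t * Qf1 t) / Qf t ^ 2) =ᶠ[𝓝 t]
        derivWithin gL1 (Ici 0) := by
      filter_upwards [isOpen_Ioi.mem_nhds ht'] with x (hx : 0 < x)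
      exact (dwL1_pos hx).symm
    exact (hcont.congr heq).continuousWithinAt

lemma contDiffL1 : ContDiffOn ℝ 1 gL1 (Ici 0) := by
  rw [show (1 : WithTop ℕ∞) = 0 + 1 from by norm_num,
    contDiffOn_succ_iff_derivWithin (uniqueDiffOn_Ici (0:ℝ))]
  refine ⟨?_, ?_, ?_⟩
  · intro t ht
    rcases eq_or_lt_of_le (Set.mem_Ici.mp ht) with rfl | ht'
    · exact hdwL10.differentiableWithinAt
    · exact (hdgL1 ht').differentiableAt.differentiableWithinAt
  · intro h; simp at h
  · rw [contDiffOn_zero]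
    exact contdwL1

-- L2 boundary condition
lemma ee_add_one_ne (t : ℝ) : ee t + 1 ≠ 0 := by have := ee_pos t; linarith

lemma hdL2E (t : ℝ) : HasDerivAt L2E (2 * ee t / (ee t + 1) ^ 2) t := by
  have h := (((hee t).sub_const 1).const_mul (1 / q3)).div ((hee t).add_const 1) (ee_add_one_ne t)
  have he : L2E = fun t => 1 / q3 * (ee t - 1) / (ee t + 1) := rfl
  rw [he]
  refine h.congr_deriv (Eq.symm ?_)
  field_simp [q3_ne, ee_add_one_ne t]
  ring

lemma contDiffee : ContDiff ℝ 1 ee := by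
  unfold ee
  exact Real.contDiff_exp.comp (contDiff_const.mul contDiff_id)

lemma contDiffL2 : ContDiffOn ℝ 1 L2E (Ici 0) := by
  have h : ContDiff ℝ 1 (fun t => 1 / q3 * (ee t - 1) / (ee t + 1)) :=
    ContDiff.div (contDiff_const.mul (contDiffee.sub contDiff_const))
      (contDiffee.add contDiff_const) ee_add_one_ne
  exact h.contDiffOn

lemma L2E_zero : L2E 0 = 0 := by rw [L2E_eq, ee_zero]; simp

lemma dwL2_zero : derivWithin L2E (Ici 0) 0 = 1 / 2 := by
  have h := (hdL2E 0).hasDerivWithinAt.derivWithin (uniqueDiffOn_Ici 0 0 self_mem_Ici)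
  rw [h, ee_zero]
  norm_num

lemma sq_ne {t : ℝ} (ht : 0 < t) : ee t ^ 2 - 1 ≠ 0 := by
  have := ee_gt_one ht; nlinarith

-- derivatives of ξE and L1E
lemma hdξE {t : ℝ} (ht : 0 < t) : HasDerivAt ξE (-12 * EE t / (EE t - 1) ^ 2) t := by
  have h := (((hEE t).add_const 1).const_mul q3).div ((hEE t).sub_const 1) (EE_sub_one_ne ht)
  have he : ξE = fun t => q3 * (EE t + 1) / (EE t - 1) := rfl
  rw [he]
  refine h.congr_deriv (Eq.symm ?_)
  rw [div_eq_div_iff (pow_ne_zero 2 (EE_sub_one_ne ht)) (pow_ne_zero 2 (EE_sub_one_ne ht))]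
  linear_combination (4 * EE t * (EE t - 1) ^ 2) * q3_sq

lemma hdL1E {t : ℝ} (ht : 0 < t) :
    HasDerivAt L1E (-4 * ee t * (EE t + ee t + 1) / (EE t - 1) ^ 2) t := by
  have h := ((((hEE t).add ((hee t).const_mul 4)).add_const 1).const_mul (1 / q3)).div
    ((hEE t).sub_const 1) (EE_sub_one_ne ht)
  have he : L1E = fun t => 1 / q3 * (EE t + 4 * ee t + 1) / (EE t - 1) := rfl
  rw [he]
  refine h.congr_deriv (Eq.symm ?_)
  simp only [Pi.add_apply]
  rw [EE_eq_sq]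
  field_simp [q3_ne, sq_ne ht]
  ring

-- algebraic identities for the ODE
lemma L1E_sq {t : ℝ} (ht : 0 < t) :
    L1E t ^ 2 = (1/3) * ((ee t ^ 2 + 4 * ee t + 1) ^ 2 / (ee t ^ 2 - 1) ^ 2) := by
  rw [L1E_eq, EE_eq_sq, div_pow, mul_pow, div_pow, one_pow, q3_sq]
  ring

lemma L2E_sq (t : ℝ) :
    L2E t ^ 2 = (1/3) * ((ee t - 1) ^ 2 / (ee t + 1) ^ 2) := by
  rw [L2E_eq, div_pow, mul_pow, div_pow, one_pow, q3_sq]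
  ring

lemma eqξ {t : ℝ} (ht : 0 < t) :
    1 - L1E t ^ 2 - 2 * L2E t ^ 2 = -12 * EE t / (EE t - 1) ^ 2 := by
  rw [L1E_sq ht, L2E_sq, EE_eq_sq]
  field_simp [sq_ne ht, ee_add_one_ne t]
  ring

lemma eqL1 {t : ℝ} (ht : 0 < t) :
    1 - ξE t * L1E t = -4 * ee t * (EE t + ee t + 1) / (EE t - 1) ^ 2 := by
  have hm : ξE t * L1E t = (EE t + 1) * (EE t + 4 * ee t + 1) / (EE t - 1) ^ 2 := by
    rw [ξE_eq, L1E_eq]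
    field_simp [q3_ne, EE_sub_one_ne ht]
  rw [hm, EE_eq_sq]
  field_simp [sq_ne ht]
  ring

lemma eqL2 {t : ℝ} (ht : 0 < t) :
    1 - ξE t * L2E t = 2 * ee t / (ee t + 1) ^ 2 := by
  have hm : ξE t * L2E t = (EE t + 1) * (ee t - 1) / ((EE t - 1) * (ee t + 1)) := by
    rw [ξE_eq, L2E_eq]
    field_simp [q3_ne, EE_sub_one_ne ht, ee_add_one_ne t]
  rw [hm, EE_eq_sq]
  field_simp [sq_ne ht, ee_add_one_ne t]
  ring

lemma ode : ReducedSystem ξE L1E L2E := by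
  intro t ht
  have ht' : (0:ℝ) < t := ht
  refine ⟨?_, ?_, ?_⟩
  · rw [show 1 - L1E t ^ 2 - 2 * L2E t ^ 2 = -12 * EE t / (EE t - 1) ^ 2 from eqξ ht']
    exact hdξE ht'
  · rw [show 1 - ξE t * L1E t = -4 * ee t * (EE t + ee t + 1) / (EE t - 1) ^ 2 from eqL1 ht']
    exact hdL1E ht'
  · rw [show 1 - ξE t * L2E t = 2 * ee t / (ee t + 1) ^ 2 from eqL2 ht']
    exact hdL2E t

-- limits at infinity
lemma tendsto_EE_atTop : Tendsto EE atTop atTop := by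
  apply Real.tendsto_exp_atTop.comp
  exact Tendsto.const_mul_atTop (by have := q3_pos; linarith) tendsto_id

lemma tendsto_ee_atTop : Tendsto ee atTop atTop := by
  apply Real.tendsto_exp_atTop.comp
  exact Tendsto.const_mul_atTop q3_pos tendsto_id

lemma limEEinv : Tendsto (fun t => (EE t)⁻¹) atTop (𝓝 0) :=
  tendsto_EE_atTop.inv_tendsto_atTop

lemma limeeinv : Tendsto (fun t => (ee t)⁻¹) atTop (𝓝 0) :=
  tendsto_ee_atTop.inv_tendsto_atTop

lemma EEinv_lt_one {t : ℝ} (ht : 0 < t) : (EE t)⁻¹ < 1 := by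
  rw [inv_lt_one_iff₀]
  right; exact EE_gt_one ht

lemma limξ : Tendsto ξE atTop (𝓝 q3) := by
  have h : Tendsto (fun t => q3 * (1 + (EE t)⁻¹) / (1 - (EE t)⁻¹)) atTop
      (𝓝 (q3 * (1 + 0) / (1 - 0))) :=
    (tendsto_const_nhds.mul (tendsto_const_nhds.add limEEinv)).div
      (tendsto_const_nhds.sub limEEinv) (by norm_num)
  rw [show q3 * (1 + 0) / (1 - 0) = q3 by ring] at h
  apply h.congr'
  filter_upwards [eventually_gt_atTop 0] with t ht
  rw [ξE_eq]
  have h0 : EE t ≠ 0 := ne_of_gt (EE_pos t)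
  have h1 := EE_sub_one_ne ht
  have h2 : 1 - (EE t)⁻¹ ≠ 0 := by
    have := EEinv_lt_one ht; linarith
  field_simp

lemma limL1 : Tendsto L1E atTop (𝓝 (1 / q3)) := by
  have h : Tendsto (fun t => 1 / q3 * (1 + 4 * (ee t)⁻¹ + (EE t)⁻¹) / (1 - (EE t)⁻¹)) atTop
      (𝓝 (1 / q3 * (1 + 4 * 0 + 0) / (1 - 0))) :=
    (tendsto_const_nhds.mul ((tendsto_const_nhds.add
      (tendsto_const_nhds.mul limeeinv)).add limEEinv)).div
      (tendsto_const_nhds.sub limEEinv) (by norm_num)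
  rw [show 1 / q3 * (1 + 4 * 0 + 0) / (1 - 0) = 1 / q3 by ring] at h
  apply h.congr'
  filter_upwards [eventually_gt_atTop 0] with t ht
  rw [L1E_eq]
  have h0 : EE t ≠ 0 := ne_of_gt (EE_pos t)
  have h0' : ee t ≠ 0 := ne_of_gt (ee_pos t)
  have h1 := EE_sub_one_ne ht
  have h2 : 1 - (EE t)⁻¹ ≠ 0 := by
    have := EEinv_lt_one ht; linarith
  rw [div_eq_div_iff h2 h1]
  rw [EE_eq_sq]
  field_simp [h0', q3_ne]

lemma limL2 : Tendsto L2E atTop (𝓝 (1 / q3)) := by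
  have h : Tendsto (fun t => 1 / q3 * (1 - (ee t)⁻¹) / (1 + (ee t)⁻¹)) atTop
      (𝓝 (1 / q3 * (1 - 0) / (1 + 0))) :=
    (tendsto_const_nhds.mul (tendsto_const_nhds.sub limeeinv)).div
      (tendsto_const_nhds.add limeeinv) (by norm_num)
  rw [show 1 / q3 * (1 - 0) / (1 + 0) = 1 / q3 by ring] at h
  apply h.congr'
  filter_upwards [eventually_gt_atTop 0] with t ht
  rw [L2E_eq]
  have h0' : ee t ≠ 0 := ne_of_gt (ee_pos t)
  have h2 : 1 + (ee t)⁻¹ ≠ 0 := by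
    have := ee_pos t
    positivity
  rw [div_eq_div_iff h2 (ee_add_one_ne t)]
  field_simp [h0', q3_ne]

theorem explicit_einstein_solution :
    ReducedSystem ξE L1E L2E ∧ ReducedBC 0 ξE L1E L2E ∧
    Tendsto ξE atTop (nhds (Real.sqrt 3)) ∧
    Tendsto L1E atTop (nhds (1 / Real.sqrt 3)) ∧
    Tendsto L2E atTop (nhds (1 / Real.sqrt 3)) := by
  refine ⟨ode, ⟨⟨gξ, contDiffξ, fun t ht => gξ_pos ht, gξ_zero, ?_⟩,
    ⟨gL1, contDiffL1, fun t ht => gL1_pos ht, gL1_zero, ?_⟩,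
    ⟨L2E, contDiffL2, fun t _ => rfl, L2E_zero, dwL2_zero⟩⟩, limξ, limL1, limL2⟩
  · rw [dwξ_zero]; norm_num
  · rw [dwL1_zero]; norm_num
end

section
/- Let α > 0 and let ξ, L1, L2 : (0,∞) → ℝ be differentiable solutions of the reduced U(2)-invariant expander system satisfying the boundary conditions at 0 with parameter α. Then lim_{t→∞} ξ(t)/t = 1 and lim_{t→∞} t·L1(t) = 1 and lim_{t→∞} t·L2(t) = 1. Moreover, if R : (0,∞) → (0,∞) is differentiable with R' = −R·L1 on (0,∞), then limsup_{t→∞} t·R(t) < ∞. -/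
open Set Filter Topology



lemma contOn' {f f' : ℝ → ℝ} {s : Set ℝ} (hf : ∀ t ∈ s, HasDerivAt f (f' t) t) :
    ContinuousOn f s := fun t ht => (hf t ht).continuousAt.continuousWithinAt

/-- growth bound from derivative lower bound on an interval -/
lemma deriv_ge_growth {f f' : ℝ → ℝ} {a b δ : ℝ} (hab : a ≤ b)
    (hf : ∀ t ∈ Icc a b, HasDerivAt f (f' t) t)
    (hδ : ∀ t ∈ Icc a b, δ ≤ f' t) :
    f a + δ * (b - a) ≤ f b := by
  have hmono : MonotoneOn (fun t => f t - δ * t) (Icc a b) := by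
    apply monotoneOn_of_deriv_nonneg (convex_Icc a b)
    · exact (contOn' hf).sub (continuous_const.mul continuous_id).continuousOn
    · intro x hx
      have hx' : x ∈ Icc a b := interior_subset hx
      exact ((hf x hx').sub ((hasDerivAt_id x).const_mul δ)).differentiableAt.differentiableWithinAt
    · intro x hx
      have hx' : x ∈ Icc a b := interior_subset hx
      have hd : HasDerivAt (fun t => f t - δ * t) (f' x - δ * 1) x :=
        (hf x hx').sub ((hasDerivAt_id x).const_mul δ)
      rw [hd.deriv]
      have := hδ x hx'; linarith
  have := hmono (left_mem_Icc.2 hab) (right_mem_Icc.2 hab) hab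
  simp only at this
  linarith

/-- decay bound from derivative upper bound on an interval -/
lemma deriv_le_growth {f f' : ℝ → ℝ} {a b δ : ℝ} (hab : a ≤ b)
    (hf : ∀ t ∈ Icc a b, HasDerivAt f (f' t) t)
    (hδ : ∀ t ∈ Icc a b, f' t ≤ δ) :
    f b ≤ f a + δ * (b - a) := by
  have := deriv_ge_growth (f := fun t => -f t) (f' := fun t => -f' t) (δ := -δ) hab
    (fun t ht => (hf t ht).neg) (fun t ht => by simpa using neg_le_neg (hδ t ht))
  linarith

/-- Two-constraint forward invariance with history. -/
lemma inv2 {f g f' g' : ℝ → ℝ} {a c d : ℝ}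
    (hf : ∀ t, a ≤ t → HasDerivAt f (f' t) t)
    (hg : ∀ t, a ≤ t → HasDerivAt g (g' t) t)
    (hfa : c < f a) (hga : g a < d)
    (hcf : ∀ s, a < s → f s = c → g s ≤ d →
      (∀ u, a ≤ u → u < s → c < f u ∧ g u < d) → 0 < f' s)
    (hcg : ∀ s, a < s → g s = d → c ≤ f s →
      (∀ u, a ≤ u → u < s → c < f u ∧ g u < d) → g' s < 0) :
    ∀ t, a ≤ t → c < f t ∧ g t < d := by
  by_contra hcon
  push_neg at hcon
  obtain ⟨t0, ht0a, ht0⟩ := hcon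
  set bad : Set ℝ := {t | a ≤ t ∧ (f t ≤ c ∨ d ≤ g t)} with hbad
  have hne : bad.Nonempty := by
    refine ⟨t0, ht0a, ?_⟩
    rcases le_or_gt (f t0) c with h | h
    · exact Or.inl h
    · exact Or.inr (ht0 h)
  have hbdd : BddBelow bad := ⟨a, fun x hx => hx.1⟩
  set s := sInf bad with hs
  have hlb : ∀ x ∈ bad, s ≤ x := fun x hx => csInf_le hbdd hx
  have has : a ≤ s := le_csInf hne fun x hx => hx.1
  have fact1 : ¬(c < f s ∧ g s < d) := by
    rintro ⟨h1, h2⟩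
    have hc1 : ∀ᶠ x in 𝓝 s, c < f x :=
      (hf s has).continuousAt.tendsto.eventually (eventually_gt_nhds h1)
    have hc2 : ∀ᶠ x in 𝓝 s, g x < d :=
      (hg s has).continuousAt.tendsto.eventually (eventually_lt_nhds h2)
    obtain ⟨δ, hδpos, hδ⟩ := Metric.eventually_nhds_iff.1 (hc1.and hc2)
    have hub : s + δ ≤ s := by
      apply le_csInf hne
      intro x hx
      by_contra hxs
      push_neg at hxs
      have hsx : s ≤ x := hlb x hx
      have hdist : dist x s < δ := by
        rw [Real.dist_eq, abs_of_nonneg (by linarith)]; linarith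
      have := hδ hdist
      rcases hx.2 with h | h
      · linarith [this.1]
      · linarith [this.2]
    linarith
  have has' : a < s := by
    rcases eq_or_lt_of_le has with h | h
    · exact absurd ⟨h ▸ hfa, h ▸ hga⟩ fact1
    · exact h
  have hist : ∀ u, a ≤ u → u < s → c < f u ∧ g u < d := by
    intro u hau hus
    by_contra hu
    have hmem : u ∈ bad := by
      refine ⟨hau, ?_⟩
      push_neg at hu
      rcases le_or_gt (f u) c with h | h
      · exact Or.inl h
      · exact Or.inr (hu h)
    exact absurd (hlb u hmem) (not_le.2 hus)
  have hIoo : Ioo a s ∈ 𝓝[<] s := Ioo_mem_nhdsLT_of_mem ⟨has', le_refl s⟩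
  have hfs : c ≤ f s := by
    apply ge_of_tendsto ((hf s has).continuousAt.tendsto.mono_left (nhdsWithin_le_nhds (s := Iio s)))
    filter_upwards [hIoo] with u hu
    exact (hist u hu.1.le hu.2).1.le
  have hgs : g s ≤ d := by
    apply le_of_tendsto ((hg s has).continuousAt.tendsto.mono_left (nhdsWithin_le_nhds (s := Iio s)))
    filter_upwards [hIoo] with u hu
    exact (hist u hu.1.le hu.2).2.le
  have hmonoF : (𝓝[<] s) ≤ 𝓝[≠] s := nhdsWithin_mono s fun x hx => ne_of_lt hx
  rcases not_and_or.1 fact1 with hbadf | hbadg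
  · have hfse : f s = c := le_antisymm (not_lt.1 hbadf) hfs
    have hpos : 0 < f' s := hcf s has' hfse hgs hist
    have hslope := (hasDerivAt_iff_tendsto_slope.1 (hf s has)).mono_left hmonoF
    have hle : f' s ≤ 0 := by
      apply le_of_tendsto hslope
      filter_upwards [hIoo] with u hu
      have h1 : c < f u := (hist u hu.1.le hu.2).1
      rw [slope_def_field]
      exact div_nonpos_of_nonneg_of_nonpos (by rw [hfse]; linarith) (by linarith [hu.2])
    linarith
  · have hgse : g s = d := le_antisymm hgs (not_lt.1 hbadg)
    have hneg : g' s < 0 := hcg s has' hgse hfs hist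
    have hslope := (hasDerivAt_iff_tendsto_slope.1 (hg s has)).mono_left hmonoF
    have hge : 0 ≤ g' s := by
      apply ge_of_tendsto hslope
      filter_upwards [hIoo] with u hu
      have h1 : g u < d := (hist u hu.1.le hu.2).2
      rw [slope_def_field]
      exact div_nonneg_iff.2 (Or.inr ⟨by rw [hgse]; linarith, by linarith [hu.2]⟩)
    linarith

lemma barrier_lower {f f' : ℝ → ℝ} {a c : ℝ}
    (hf : ∀ t, a ≤ t → HasDerivAt f (f' t) t) (hfa : c < f a)
    (hc : ∀ s, a < s → f s = c → (∀ u, a ≤ u → u < s → c < f u) → 0 < f' s) :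
    ∀ t, a ≤ t → c < f t := by
  intro t ht
  exact (inv2 (g := fun _ => (0:ℝ)) (g' := fun _ => (0:ℝ)) (d := 1) hf
    (fun t _ => hasDerivAt_const t 0) hfa one_pos
    (fun s hs hfs _ hist => hc s hs hfs fun u h1 h2 => (hist u h1 h2).1)
    (fun s _ h _ _ => absurd h (by norm_num)) t ht).1

lemma barrier_upper {f f' : ℝ → ℝ} {a d : ℝ}
    (hf : ∀ t, a ≤ t → HasDerivAt f (f' t) t) (hfa : f a < d)
    (hc : ∀ s, a < s → f s = d → (∀ u, a ≤ u → u < s → f u < d) → f' s < 0) :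
    ∀ t, a ≤ t → f t < d := by
  intro t ht
  exact (inv2 (f := fun _ => (1:ℝ)) (f' := fun _ => (0:ℝ)) (c := 0)
    (fun t _ => hasDerivAt_const t 1) hf one_pos hfa
    (fun s _ h _ _ => absurd h (by norm_num))
    (fun s hs hfs _ hist => hc s hs hfs fun u h1 h2 => (hist u h1 h2).2) t ht).2


lemma bc_slope {g : ℝ → ℝ} {v : ℝ} (hcd : ContDiffOn ℝ 1 g (Ici 0)) (h0 : g 0 = 0)
    (hv : derivWithin g (Ici 0) 0 = v) :
    Tendsto (fun t => g t / t) (𝓝[>] (0:ℝ)) (𝓝 v) := by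
  have hdiff : DifferentiableWithinAt ℝ g (Ici 0) 0 :=
    (hcd.differentiableOn one_ne_zero) 0 self_mem_Ici
  have hder := hdiff.hasDerivWithinAt
  rw [hv, hasDerivWithinAt_iff_tendsto_slope] at hder
  have hset : (Ici (0:ℝ)) \ {0} = Ioi 0 := by
    ext x
    simp only [mem_diff, mem_Ici, mem_singleton_iff, mem_Ioi]
    constructor
    · rintro ⟨h1, h2⟩; exact lt_of_le_of_ne h1 (Ne.symm h2)
    · intro h; exact ⟨h.le, (ne_of_gt h)⟩
  rw [hset] at hder
  refine hder.congr fun t => ?_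
  rw [slope_def_field, h0]
  ring


lemma choose_a {α : ℝ} (hα : 0 < α) {ξ L1 L2 : ℝ → ℝ}
    (hbc : (∃ g : ℝ → ℝ, ContDiffOn ℝ 1 g (Ici 0) ∧ (∀ t ∈ Ioi (0 : ℝ), g t = ξ t - 1 / t) ∧
      g 0 = 0 ∧ derivWithin g (Ici 0) 0 = 2 * α / 3 + 1) ∧
  (∃ g : ℝ → ℝ, ContDiffOn ℝ 1 g (Ici 0) ∧ (∀ t ∈ Ioi (0 : ℝ), g t = L1 t - 1 / t) ∧
      g 0 = 0 ∧ derivWithin g (Ici 0) 0 = -α / 3) ∧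
  (∃ g : ℝ → ℝ, ContDiffOn ℝ 1 g (Ici 0) ∧ (∀ t ∈ Ioi (0 : ℝ), g t = L2 t) ∧
      g 0 = 0 ∧ derivWithin g (Ici 0) 0 = 1 / 2)) :
    ∃ a : ℝ, 0 < a ∧ 0 < L2 a ∧ 0 < L1 a ∧
      0 < ξ a - (L1 a + 2*L2 a) ∧ 2 + α < ξ a^2 - (L1 a^2 + 2*L2 a^2) := by
  obtain ⟨⟨g0, hg0cd, hg0eq, hg00, hg0d⟩, ⟨g1, hg1cd, hg1eq, hg10, hg1d⟩,
    ⟨g2, hg2cd, hg2eq, hg20, hg2d⟩⟩ := hbc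
  have s0 := bc_slope hg0cd hg00 hg0d
  have s1 := bc_slope hg1cd hg10 hg1d
  have s2 := bc_slope hg2cd hg20 hg2d
  have tid : Tendsto (fun t : ℝ => t) (𝓝[>] (0:ℝ)) (𝓝 0) :=
    tendsto_id.mono_left nhdsWithin_le_nhds
  have c0 : Tendsto g0 (𝓝[>] (0:ℝ)) (𝓝 0) := by
    have h := s0.mul tid
    rw [mul_zero] at h
    apply h.congr'
    filter_upwards [self_mem_nhdsWithin] with t ht
    exact div_mul_cancel₀ _ (ne_of_gt ht)
  have c1 : Tendsto g1 (𝓝[>] (0:ℝ)) (𝓝 0) := by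
    have h := s1.mul tid
    rw [mul_zero] at h
    apply h.congr'
    filter_upwards [self_mem_nhdsWithin] with t ht
    exact div_mul_cancel₀ _ (ne_of_gt ht)
  have c2 : Tendsto g2 (𝓝[>] (0:ℝ)) (𝓝 0) := by
    have h := s2.mul tid
    rw [mul_zero] at h
    apply h.congr'
    filter_upwards [self_mem_nhdsWithin] with t ht
    exact div_mul_cancel₀ _ (ne_of_gt ht)
  have ev1 : ∀ᶠ t in 𝓝[>] (0:ℝ), 1/4 < g2 t / t ∧ g2 t / t < 3/4 :=
    (s2.eventually (eventually_gt_nhds (by norm_num))).and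
      (s2.eventually (eventually_lt_nhds (by norm_num)))
  have ev2 : ∀ᶠ t in 𝓝[>] (0:ℝ), |g1 t| < 1/2 := by
    have := Metric.tendsto_nhds.1 c1 (1/2) (by norm_num)
    filter_upwards [this] with t ht
    rwa [Real.dist_eq, sub_zero] at ht
  have ev3 : ∀ᶠ t in 𝓝[>] (0:ℝ), 0 < t ∧ t < 1/2 := by
    filter_upwards [Ioo_mem_nhdsGT_of_mem (⟨le_refl (0:ℝ), by norm_num⟩ :
      (0:ℝ) ∈ Ico (0:ℝ) (1/2))] with t ht
    exact ⟨ht.1, ht.2⟩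
  have s3 : Tendsto (fun t => (g0 t - g1 t - 2*g2 t)/t) (𝓝[>] (0:ℝ)) (𝓝 α) := by
    have h := s0.sub (s1.add (s2.const_mul 2))
    have hval : (2*α/3+1) - ((-α/3) + 2*(1/2)) = α := by ring
    rw [hval] at h
    refine h.congr fun t => ?_
    ring
  have ev4 : ∀ᶠ t in 𝓝[>] (0:ℝ), α/2 < (g0 t - g1 t - 2*g2 t)/t :=
    s3.eventually (eventually_gt_nhds (by linarith))
  have s4 : Tendsto (fun t => (g0 t - g1 t)/t) (𝓝[>] (0:ℝ)) (𝓝 (α + 1)) := by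
    have h := s0.sub s1
    have hval : (2*α/3+1) - (-α/3) = α + 1 := by ring
    rw [hval] at h
    refine h.congr fun t => ?_
    ring
  have s5 : Tendsto (fun t => 2*((g0 t - g1 t)/t) + (g0 t - g1 t)*(g0 t + g1 t) - 2*(g2 t)^2)
      (𝓝[>] (0:ℝ)) (𝓝 (2*α + 2)) := by
    have h := ((s4.const_mul 2).add ((c0.sub c1).mul (c0.add c1))).sub ((c2.pow 2).const_mul 2)
    have hval : 2*(α+1) + (0-0)*(0+0) - 2*(0:ℝ)^2 = 2*α + 2 := by ring
    rw [hval] at h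
    exact h
  have ev5 : ∀ᶠ t in 𝓝[>] (0:ℝ),
      2 + (3/2)*α < 2*((g0 t - g1 t)/t) + (g0 t - g1 t)*(g0 t + g1 t) - 2*(g2 t)^2 :=
    s5.eventually (eventually_gt_nhds (by linarith))
  have grand : ∀ᶠ t in 𝓝[>] (0:ℝ), 0 < t ∧ 0 < L2 t ∧ 0 < L1 t ∧
      0 < ξ t - (L1 t + 2*L2 t) ∧ 2 + α < ξ t^2 - (L1 t^2 + 2*L2 t^2) := by
    filter_upwards [ev1, ev2, ev3, ev4, ev5, self_mem_nhdsWithin] with t h1 h2 h3 h4 h5 ht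
    have ht' : (0:ℝ) < t := ht
    have htne : t ≠ 0 := ne_of_gt ht'
    have hxi : ξ t = 1/t + g0 t := by have := hg0eq t ht; linarith
    have hl1 : L1 t = 1/t + g1 t := by have := hg1eq t ht; linarith
    have hl2 : L2 t = g2 t := (hg2eq t ht).symm
    have hg2lb : 1/4 * t < g2 t := (lt_div_iff₀ ht').1 h1.1
    have ht2 : 2 < 1/t := by
      rw [lt_div_iff₀ ht']; linarith [h3.2]
    have habs := abs_lt.1 h2
    refine ⟨ht', ?_, ?_, ?_, ?_⟩
    · rw [hl2]; linarith
    · rw [hl1]; linarith [habs.1]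
    · have hnum : α/2 * t < g0 t - g1 t - 2*g2 t := (lt_div_iff₀ ht').1 h4
      have : 0 < α/2 * t := by positivity
      rw [hxi, hl1, hl2]; linarith
    · have hK : ξ t^2 - (L1 t^2 + 2*L2 t^2)
          = 2*((g0 t - g1 t)/t) + (g0 t - g1 t)*(g0 t + g1 t) - 2*(g2 t)^2 := by
        rw [hxi, hl1, hl2]
        field_simp
        ring
      rw [hK]; linarith
  obtain ⟨a, ha⟩ := grand.exists
  exact ⟨a, ha.1, ha.2.1, ha.2.2.1, ha.2.2.2.1, ha.2.2.2.2⟩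


set_option maxHeartbeats 2000000 in
lemma dynamics {α : ℝ} (hα : 0 < α) {ξ L1 L2 : ℝ → ℝ}
    (hd0 : ∀ t, 0 < t → HasDerivAt ξ (1 - L1 t^2 - 2*L2 t^2) t)
    (hd1 : ∀ t, 0 < t → HasDerivAt L1 (1 - ξ t * L1 t) t)
    (hd2 : ∀ t, 0 < t → HasDerivAt L2 (1 - ξ t * L2 t) t)
    {a : ℝ} (ha : 0 < a) (hL2a : 0 < L2 a) (hL1a : 0 < L1 a)
    (hDa : 0 < ξ a - (L1 a + 2*L2 a)) (hKa : 2 + α < ξ a^2 - (L1 a^2 + 2*L2 a^2)) :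
    ∃ t2, 1 ≤ t2 ∧ a ≤ t2 ∧
      (∀ t, t2 ≤ t → 0 < L1 t ∧ 0 < L2 t ∧ 16 < ξ t ∧ L1 t + 2*L2 t < 1/2) ∧
      (∀ t, t2 ≤ t → ξ t2 + (3/4)*(t - t2) ≤ ξ t) ∧
      (∀ ε, 0 < ε → ∃ T, t2 ≤ T ∧ ∀ t, T ≤ t → L1 t + 2*L2 t < ε) := by
  have hpos : ∀ t, a ≤ t → 0 < t := fun t ht => lt_of_lt_of_le ha ht
  have hL2 : ∀ t, a ≤ t → 0 < L2 t := by
    refine barrier_lower (f' := fun t => 1 - ξ t * L2 t)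
      (fun t ht => hd2 t (hpos t ht)) hL2a ?_
    intro s _ h0 _
    show 0 < 1 - ξ s * L2 s
    rw [h0]; norm_num
  have hL1 : ∀ t, a ≤ t → 0 < L1 t := by
    refine barrier_lower (f' := fun t => 1 - ξ t * L1 t)
      (fun t ht => hd1 t (hpos t ht)) hL1a ?_
    intro s _ h0 _
    show 0 < 1 - ξ s * L1 s
    rw [h0]; norm_num
  have hdσ : ∀ t, 0 < t → HasDerivAt (fun t => L1 t + 2*L2 t)
      (3 - ξ t * (L1 t + 2*L2 t)) t := by
    intro t ht
    have h := (hd1 t ht).add ((hd2 t ht).const_mul 2)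
    exact h.congr_deriv (by ring)
  have hderK : ∀ u, 0 < u → HasDerivAt (fun t => ξ t^2 - (L1 t^2 + 2*L2 t^2))
      (2*(ξ u - (L1 u + 2*L2 u))) u := by
    intro u hu
    have h := ((hd0 u hu).pow 2).sub (((hd1 u hu).pow 2).add (((hd2 u hu).pow 2).const_mul 2))
    exact h.congr_deriv (by push_cast; ring)
  have hD : ∀ t, a ≤ t → 0 < ξ t - (L1 t + 2*L2 t) := by
    refine barrier_lower
      (f' := fun t => (1 - L1 t^2 - 2*L2 t^2) - (3 - ξ t * (L1 t + 2*L2 t)))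
      (fun t ht => (hd0 t (hpos t ht)).sub (hdσ t (hpos t ht))) hDa ?_
    intro s hs h0 hist
    have hKmono : ξ a^2 - (L1 a^2 + 2*L2 a^2) ≤ ξ s^2 - (L1 s^2 + 2*L2 s^2) := by
      have h := deriv_ge_growth (δ := 0) (le_of_lt hs)
        (fun u hu => hderK u (hpos u hu.1))
        (fun u hu => by
          rcases lt_or_eq_of_le hu.2 with h | h
          · have := hist u hu.1 h; linarith
          · rw [h]; linarith)
      linarith
    have hξs : ξ s = L1 s + 2*L2 s := by linarith
    have hsq : ξ s * (L1 s + 2*L2 s) = ξ s^2 := by rw [hξs]; ring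
    show 0 < 1 - L1 s^2 - 2*L2 s^2 - (3 - ξ s * (L1 s + 2*L2 s))
    linarith
  have hKmono2 : ∀ s t, a ≤ s → s ≤ t →
      ξ s^2 - (L1 s^2 + 2*L2 s^2) ≤ ξ t^2 - (L1 t^2 + 2*L2 t^2) := by
    intro s t hs hst
    have h := deriv_ge_growth (δ := 0) hst
      (fun u hu => hderK u (hpos u (hs.trans hu.1)))
      (fun u hu => by have := hD u (hs.trans hu.1); linarith)
    linarith
  have hKa2 : ∀ t, a ≤ t → 2 + α < ξ t^2 - (L1 t^2 + 2*L2 t^2) :=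
    fun t ht => lt_of_lt_of_le hKa (hKmono2 a t le_rfl ht)
  have hξpos : ∀ t, a ≤ t → 0 < ξ t := by
    intro t ht
    have := hD t ht; have := hL1 t ht; have := hL2 t ht; linarith
  -- ξ is unbounded
  have hub : ∀ M b, a ≤ b → ∃ t, b ≤ t ∧ M < ξ t := by
    intro M b hab
    by_contra hcon
    push_neg at hcon
    set M0 := max M 1 with hM0def
    have hM1 : (1:ℝ) ≤ M0 := le_max_right _ _
    have hM0pos : (0:ℝ) < M0 := by linarith
    have hbM : ∀ t, b ≤ t → ξ t ≤ M0 := fun t ht => le_trans (hcon t ht) (le_max_left _ _)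
    have hder : ∀ t, 0 < t → HasDerivAt (fun t => ξ t - (L1 t + 2*L2 t))
        ((1 - L1 t^2 - 2*L2 t^2) - (3 - ξ t * (L1 t + 2*L2 t))) t :=
      fun t ht => (hd0 t ht).sub (hdσ t ht)
    have hMc : M0 * (α/(2*M0)) = α/2 := by field_simp
    have key : ∀ u, b ≤ u → ξ u - (L1 u + 2*L2 u) ≤ α/(2*M0) →
        α/2 ≤ (1 - L1 u^2 - 2*L2 u^2) - (3 - ξ u*(L1 u + 2*L2 u)) := by
      intro u hu hDu
      have h1 := hKa2 u (hab.trans hu)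
      have h3 := hD u (hab.trans hu)
      have h4 := hbM u hu
      have h5 := hξpos u (hab.trans hu)
      have h6 : ξ u * (ξ u - (L1 u + 2*L2 u)) ≤ M0 * (α/(2*M0)) :=
        mul_le_mul h4 hDu (le_of_lt h3) (le_of_lt hM0pos)
      rw [hMc] at h6
      have h7 : ξ u * (ξ u - (L1 u + 2*L2 u)) = ξ u^2 - ξ u*(L1 u + 2*L2 u) := by ring
      linarith
    have hc : 0 < α/(2*M0) := by positivity
    have step1 : ∃ t1, b ≤ t1 ∧ α/(2*M0) ≤ ξ t1 - (L1 t1 + 2*L2 t1) := by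
      by_contra h
      push_neg at h
      set T := b + (2/α) * (M0 + |ξ b - (L1 b + 2*L2 b)|) + 1 with hT
      have hnn : 0 ≤ (2/α) * (M0 + |ξ b - (L1 b + 2*L2 b)|) := by positivity
      have hbT : b ≤ T := by rw [hT]; linarith
      have hgrow := deriv_ge_growth (δ := α/2) hbT
        (fun u hu => hder u (hpos u (hab.trans hu.1)))
        (fun u hu => key u hu.1 (le_of_lt (h u hu.1)))
      have hσT : 0 < L1 T + 2*L2 T := by
        have := hL1 T (hab.trans hbT); have := hL2 T (hab.trans hbT); linarith
      have hξT := hbM T hbT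
      have habs : -|ξ b - (L1 b + 2*L2 b)| ≤ ξ b - (L1 b + 2*L2 b) := neg_abs_le _
      have hcalc : (α/2) * (T - b) = M0 + |ξ b - (L1 b + 2*L2 b)| + α/2 := by
        rw [hT]; field_simp; ring
      linarith
    obtain ⟨t1, hbt1, ht1⟩ := step1
    have step2 : ∀ t, t1 ≤ t → α/(2*M0)/2 < ξ t - (L1 t + 2*L2 t) := by
      refine barrier_lower
        (f' := fun t => (1 - L1 t^2 - 2*L2 t^2) - (3 - ξ t*(L1 t + 2*L2 t)))
        (fun t ht => hder t (hpos t ((hab.trans hbt1).trans ht))) (by linarith) ?_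
      intro s hs h0 _
      have := key s (hbt1.trans hs.le) (by linarith)
      show 0 < 1 - L1 s^2 - 2*L2 s^2 - (3 - ξ s * (L1 s + 2*L2 s))
      linarith
    set c := α/(2*M0) with hcdef
    set J := M0^2 + |ξ t1^2 - (L1 t1^2 + 2*L2 t1^2)| + 1 with hJ
    have hJpos : 0 < J := by positivity
    set T2 := t1 + J/(c/2) with hT2
    have hfracnn : 0 ≤ J/(c/2) := by positivity
    have ht1T2 : t1 ≤ T2 := by rw [hT2]; linarith
    have hgrowK := deriv_ge_growth (δ := c/2) ht1T2
      (fun u hu => hderK u (hpos u ((hab.trans hbt1).trans hu.1)))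
      (fun u hu => by have := step2 u hu.1; linarith)
    have hc2 : 0 < c/2 := by positivity
    have hfrac : (c/2) * (T2 - t1) = J := by
      rw [hT2]; field_simp; ring
    have h1 : ξ T2 ≤ M0 := hbM T2 (hbt1.trans ht1T2)
    have h2 : 0 < ξ T2 := hξpos T2 (hab.trans (hbt1.trans ht1T2))
    have h3 : ξ T2^2 ≤ M0^2 := by nlinarith
    have h4 : 0 ≤ L1 T2^2 + 2*L2 T2^2 := by positivity
    have habsK : -|ξ t1^2 - (L1 t1^2 + 2*L2 t1^2)| ≤ ξ t1^2 - (L1 t1^2 + 2*L2 t1^2) :=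
      neg_abs_le _
    rw [hfrac] at hgrowK
    rw [hJ] at hgrowK
    linarith
  -- eventually σ < 2
  have hσ2 : ∃ T0, a ≤ T0 ∧ ∀ t, T0 ≤ t → L1 t + 2*L2 t < 2 := by
    by_cases hex : ∃ t, a ≤ t ∧ L1 t + 2*L2 t < 2
    · obtain ⟨T0, hT0, hT0v⟩ := hex
      refine ⟨T0, hT0, ?_⟩
      refine barrier_upper (f' := fun t => 3 - ξ t*(L1 t + 2*L2 t))
        (fun t ht => hdσ t (hpos t (hT0.trans ht))) hT0v ?_
      intro s hs h0 _
      have hDs := hD s (hT0.trans hs.le)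
      have h0' : L1 s + 2*L2 s = 2 := h0
      show 3 - ξ s * (L1 s + 2*L2 s) < 0
      rw [h0'] at hDs ⊢
      linarith
    · push_neg at hex
      exfalso
      set T := a + (L1 a + 2*L2 a) + 1 with hT
      have haT : a ≤ T := by
        have h1 := hL1 a le_rfl; have h2 := hL2 a le_rfl
        rw [hT]; linarith
      have hgrow := deriv_le_growth (δ := -1) haT
        (fun u hu => hdσ u (hpos u hu.1))
        (fun u hu => by
          have h1 := hex u hu.1
          have h2 := hD u hu.1
          show 3 - ξ u * (L1 u + 2*L2 u) ≤ -1
          nlinarith)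
      have h3 := hex T haT
      linarith
  obtain ⟨T0, hT0a, hσlt2⟩ := hσ2
  obtain ⟨t1, hbt1, ht1ξ⟩ := hub 30 (max T0 1) (hT0a.trans (le_max_left _ _))
  have ht1a : a ≤ t1 := (hT0a.trans (le_max_left _ _)).trans hbt1
  have hσb : ∀ t, t1 ≤ t → L1 t + 2*L2 t < 2 :=
    fun t ht => hσlt2 t (((le_max_left T0 1).trans hbt1).trans ht)
  have hSb : ∀ t, a ≤ t → L1 t^2 + 2*L2 t^2 ≤ (L1 t + 2*L2 t)^2 := by
    intro t ht
    nlinarith [hL1 t ht, hL2 t ht]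
  have hgrow27 : ∀ t, t1 ≤ t → ξ t1 - 3*(t - t1) ≤ ξ t := by
    intro t ht
    have h := deriv_ge_growth (δ := -3) ht (fun u hu => hd0 u (hpos u (ht1a.trans hu.1)))
      (fun u hu => by
        have h1 := hσb u hu.1
        have h2 := hSb u (ht1a.trans hu.1)
        have h3 := hL1 u (ht1a.trans hu.1)
        have h4 := hL2 u (ht1a.trans hu.1)
        have h5 : 0 ≤ L1 u + 2*L2 u := by linarith
        have h6 : (L1 u + 2*L2 u)^2 ≤ 2^2 := pow_le_pow_left₀ h5 h1.le 2
        show -3 ≤ 1 - L1 u^2 - 2*L2 u^2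
        nlinarith)
    linarith
  have hfind : ∃ t2, t1 ≤ t2 ∧ t2 ≤ t1 + 1 ∧ L1 t2 + 2*L2 t2 < 1/2 := by
    by_contra h
    push_neg at h
    have hgrow := deriv_le_growth (δ := -10) (by linarith : t1 ≤ t1+1)
      (fun u hu => hdσ u (hpos u (ht1a.trans hu.1)))
      (fun u hu => by
        have h1 := h u hu.1 hu.2
        have h2 : 27 ≤ ξ u := by
          have h5 := hgrow27 u hu.1
          have h6 : u - t1 ≤ 1 := by linarith [hu.2]
          linarith [ht1ξ]
        have h3 : 0 ≤ (1:ℝ)/2 := by norm_num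
        have h4 : (27:ℝ)*(1/2) ≤ ξ u * (L1 u + 2*L2 u) :=
          mul_le_mul h2 h1 h3 (le_trans (by norm_num) h2)
        show 3 - ξ u * (L1 u + 2*L2 u) ≤ -10
        linarith)
    have h1 := h t1 le_rfl (by linarith)
    have h2 := h (t1+1) (by linarith) le_rfl
    have h3 := hσb t1 le_rfl
    linarith
  obtain ⟨t2, ht1t2, ht2le, ht2σ⟩ := hfind
  have ht2a : a ≤ t2 := ht1a.trans ht1t2
  have ht2ξ : 27 ≤ ξ t2 := by
    have := hgrow27 t2 ht1t2
    linarith [ht1ξ]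
  have htrap : ∀ t, t2 ≤ t → 16 < ξ t ∧ L1 t + 2*L2 t < 1/2 := by
    refine inv2 (f := ξ) (g := fun t => L1 t + 2*L2 t)
      (f' := fun t => 1 - L1 t^2 - 2*L2 t^2) (g' := fun t => 3 - ξ t*(L1 t + 2*L2 t))
      (fun t ht => hd0 t (hpos t (ht2a.trans ht))) (fun t ht => hdσ t (hpos t (ht2a.trans ht)))
      (by linarith) ht2σ ?_ ?_
    · intro s hs h0 hσs _
      have h2 := hSb s (ht2a.trans hs.le)
      have h3 := hL1 s (ht2a.trans hs.le)
      have h4 := hL2 s (ht2a.trans hs.le)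
      have h5 : 0 ≤ L1 s + 2*L2 s := by linarith
      have h6 : (L1 s + 2*L2 s)^2 ≤ (1/2:ℝ)^2 := pow_le_pow_left₀ h5 hσs 2
      show 0 < 1 - L1 s^2 - 2*L2 s^2
      nlinarith
    · intro s hs h0 hξs _
      have h0' : L1 s + 2*L2 s = 1/2 := h0
      show 3 - ξ s * (L1 s + 2*L2 s) < 0
      rw [h0']
      linarith
  have h1t2 : 1 ≤ t2 := ((le_max_right T0 1).trans hbt1).trans ht1t2
  have hgrow34 : ∀ t, t2 ≤ t → ξ t2 + (3/4)*(t - t2) ≤ ξ t := by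
    intro t ht
    exact deriv_ge_growth (δ := 3/4) ht (fun u hu => hd0 u (hpos u (ht2a.trans hu.1)))
      (fun u hu => by
        have h1 := (htrap u hu.1).2
        have h2 := hSb u (ht2a.trans hu.1)
        have h3 := hL1 u (ht2a.trans hu.1)
        have h4 := hL2 u (ht2a.trans hu.1)
        have h5 : 0 ≤ L1 u + 2*L2 u := by linarith
        have h6 : (L1 u + 2*L2 u)^2 ≤ (1/2:ℝ)^2 := pow_le_pow_left₀ h5 h1.le 2
        show 3/4 ≤ 1 - L1 u^2 - 2*L2 u^2
        nlinarith)
  have hξbig : ∀ C : ℝ, ∃ T, t2 ≤ T ∧ ∀ t, T ≤ t → C ≤ ξ t := by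
    intro C
    have hmaxnn : 0 ≤ max (C - ξ t2) 0 := le_max_right _ _
    refine ⟨t2 + (4/3)*(max (C - ξ t2) 0), by linarith, ?_⟩
    intro t ht
    have hT2t : t2 ≤ t := by linarith
    have h := hgrow34 t hT2t
    have h2 : (4/3)*max (C - ξ t2) 0 ≤ t - t2 := by linarith
    have h3 : (3/4)*((4/3)*max (C - ξ t2) 0) ≤ (3/4)*(t - t2) := by linarith
    have h4 : C - ξ t2 ≤ max (C - ξ t2) 0 := le_max_left _ _
    linarith
  have hσsmall : ∀ ε, 0 < ε → ∃ T, t2 ≤ T ∧ ∀ t, T ≤ t → L1 t + 2*L2 t < ε := by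
    intro ε hε
    have hε'pos : 0 < min ε (1/4) := lt_min hε (by norm_num)
    have hε'le : min ε (1/4) ≤ 1/4 := min_le_right _ _
    obtain ⟨T1, hT1t2, hT1⟩ := hξbig (7/min ε (1/4))
    have hesc : ∃ t3, T1 ≤ t3 ∧ t3 ≤ T1+1 ∧ L1 t3 + 2*L2 t3 < min ε (1/4) := by
      by_contra h
      push_neg at h
      have hgrow := deriv_le_growth (δ := -4) (by linarith : T1 ≤ T1+1)
        (fun u hu => hdσ u (hpos u (ht2a.trans (hT1t2.trans hu.1))))
        (fun u hu => by
          have h1 := h u hu.1 hu.2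
          have h2 := hT1 u hu.1
          have h3 : 7 ≤ ξ u * min ε (1/4) := by
            rw [div_le_iff₀ hε'pos] at h2
            linarith
          have h4 : ξ u * min ε (1/4) ≤ ξ u * (L1 u + 2*L2 u) := by
            apply mul_le_mul_of_nonneg_left h1
            exact (hξpos u (ht2a.trans (hT1t2.trans hu.1))).le
          show 3 - ξ u * (L1 u + 2*L2 u) ≤ -4
          linarith)
      have h1 := h T1 le_rfl (by linarith)
      have h2 := h (T1+1) (by linarith) le_rfl
      have h3 := (htrap T1 hT1t2).2
      linarith
    obtain ⟨t3, hT1t3, _, ht3σ⟩ := hesc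
    refine ⟨t3, hT1t2.trans hT1t3, ?_⟩
    have hinv := barrier_upper (f' := fun t => 3 - ξ t*(L1 t + 2*L2 t))
      (fun t ht => hdσ t (hpos t (ht2a.trans (hT1t2.trans (hT1t3.trans ht))))) ht3σ ?_
    · intro t ht
      exact lt_of_lt_of_le (hinv t ht) (min_le_left _ _)
    · intro s hs h0 _
      have h2 := hT1 s (hT1t3.trans hs.le)
      have h3 : 7 ≤ ξ s * min ε (1/4) := by
        rw [div_le_iff₀ hε'pos] at h2
        linarith
      have h0' : L1 s + 2*L2 s = min ε (1/4) := h0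
      show 3 - ξ s * (L1 s + 2*L2 s) < 0
      rw [h0']
      linarith
  refine ⟨t2, h1t2, ht2a, ?_, hgrow34, hσsmall⟩
  intro t ht
  exact ⟨hL1 t (ht2a.trans ht), hL2 t (ht2a.trans ht), (htrap t ht).1, (htrap t ht).2⟩


set_option maxHeartbeats 1000000 in
lemma xi_lim {ξ L1 L2 : ℝ → ℝ} {t2 : ℝ}
    (hd0 : ∀ t, 0 < t → HasDerivAt ξ (1 - L1 t^2 - 2*L2 t^2) t)
    (h1t2 : 1 ≤ t2)
    (htr : ∀ t, t2 ≤ t → 0 < L1 t ∧ 0 < L2 t ∧ 16 < ξ t ∧ L1 t + 2*L2 t < 1/2)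
    (hσs : ∀ ε, 0 < ε → ∃ T, t2 ≤ T ∧ ∀ t, T ≤ t → L1 t + 2*L2 t < ε) :
    Tendsto (fun t => ξ t / t) atTop (𝓝 1) := by
  rw [Metric.tendsto_atTop]
  intro ε0 hε0
  have hεpos : 0 < min (ε0/2) (1/2) := lt_min (by linarith) (by norm_num)
  have hεle : min (ε0/2) (1/2) ≤ 1/2 := min_le_right _ _
  have hεe0 : min (ε0/2) (1/2) ≤ ε0/2 := min_le_left _ _
  obtain ⟨T, hTt2, hT⟩ := hσs (min (ε0/2) (1/2)) hεpos
  have hposT : ∀ t, T ≤ t → 0 < t := fun t ht => by linarith [h1t2, hTt2]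
  have hup : ∀ t, T ≤ t → ξ t ≤ ξ T + (t - T) := by
    intro t ht
    have h := deriv_le_growth (δ := 1) ht (fun u hu => hd0 u (hposT u hu.1))
      (fun u hu => by
        have h1 := (htr u (hTt2.trans hu.1)).1
        have h2 := (htr u (hTt2.trans hu.1)).2.1
        show 1 - L1 u^2 - 2*L2 u^2 ≤ 1
        nlinarith)
    linarith
  have hlow : ∀ t, T ≤ t → ξ T + (1 - min (ε0/2) (1/2))*(t - T) ≤ ξ t := by
    intro t ht
    exact deriv_ge_growth (δ := 1 - min (ε0/2) (1/2)) ht (fun u hu => hd0 u (hposT u hu.1))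
      (fun u hu => by
        have h1 := (htr u (hTt2.trans hu.1)).1
        have h2 := (htr u (hTt2.trans hu.1)).2.1
        have h3 := hT u hu.1
        have h5 : 0 ≤ L1 u + 2*L2 u := by linarith
        have h6 : (L1 u + 2*L2 u)^2 ≤ (min (ε0/2) (1/2))^2 := pow_le_pow_left₀ h5 h3.le 2
        have h7 : (min (ε0/2) (1/2))^2 ≤ min (ε0/2) (1/2) * 1 := by nlinarith
        show 1 - min (ε0/2) (1/2) ≤ 1 - L1 u^2 - 2*L2 u^2
        nlinarith)
  refine ⟨max T (1 + 2*|ξ T - T|/ε0), fun t ht => ?_⟩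
  have htT : T ≤ t := le_trans (le_max_left _ _) ht
  have ht1 : 1 ≤ t := by linarith [hTt2, h1t2]
  have htpos : (0:ℝ) < t := by linarith
  have e1 : ξ t - t ≤ ξ T - T := by linarith [hup t htT]
  have e2 : (ξ T - T) - min (ε0/2) (1/2)*(t - T) ≤ ξ t - t := by
    have := hlow t htT
    nlinarith
  have hTnn : 0 ≤ T := by linarith [hTt2, h1t2]
  have e3 : |ξ t - t| ≤ |ξ T - T| + min (ε0/2) (1/2)*t := by
    rw [abs_le]
    constructor
    · have h8 : -|ξ T - T| ≤ ξ T - T := neg_abs_le _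
      have h9 : min (ε0/2) (1/2)*(t - T) ≤ min (ε0/2) (1/2)*t := by nlinarith
      linarith
    · have h8 : ξ T - T ≤ |ξ T - T| := le_abs_self _
      have h9 : 0 ≤ min (ε0/2) (1/2)*t := by positivity
      linarith
  rw [Real.dist_eq]
  have hrw : ξ t / t - 1 = (ξ t - t)/t := by field_simp
  rw [hrw, abs_div, abs_of_pos htpos]
  have hN : 1 + 2*|ξ T - T|/ε0 ≤ t := le_trans (le_max_right _ _) ht
  have h10 : |ξ T - T| < ε0/2 * t := by
    have h11 : ε0/2 * (1 + 2*|ξ T - T|/ε0) = ε0/2 + |ξ T - T| := by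
      field_simp
    nlinarith
  have h12 : |ξ T - T|/t < ε0/2 := by
    rw [div_lt_iff₀ htpos]
    linarith
  have h13 : |ξ t - t|/t ≤ (|ξ T - T| + min (ε0/2) (1/2)*t)/t := by gcongr
  have h14 : (|ξ T - T| + min (ε0/2) (1/2)*t)/t = |ξ T - T|/t + min (ε0/2) (1/2) := by
    field_simp
  rw [h14] at h13
  linarith

set_option maxHeartbeats 2000000 in
lemma m_lim {ξ L1 L2 L : ℝ → ℝ} {t2 : ℝ}
    (hd0 : ∀ t, 0 < t → HasDerivAt ξ (1 - L1 t^2 - 2*L2 t^2) t)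
    (hdL : ∀ t, 0 < t → HasDerivAt L (1 - ξ t * L t) t)
    (h1t2 : 1 ≤ t2)
    (htr : ∀ t, t2 ≤ t → 0 < L1 t ∧ 0 < L2 t ∧ 16 < ξ t ∧ L1 t + 2*L2 t < 1/2)
    (hσs : ∀ ε, 0 < ε → ∃ T, t2 ≤ T ∧ ∀ t, T ≤ t → L1 t + 2*L2 t < ε)
    (hLpos : ∀ t, t2 ≤ t → 0 < L t)
    (hLσ : ∀ t, t2 ≤ t → L t ≤ L1 t + 2*L2 t) :
    Tendsto (fun t => ξ t * L t) atTop (𝓝 1) := by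
  have hdm : ∀ t, 0 < t → HasDerivAt (fun t => ξ t * L t - 1)
      (-(ξ t) * (ξ t * L t - 1) + L t * (1 - (L1 t^2 + 2*L2 t^2))) t := by
    intro t ht
    have h := ((hd0 t ht).mul (hdL t ht)).sub_const 1
    exact h.congr_deriv (by ring)
  rw [Metric.tendsto_atTop]
  intro ε0 hε0
  set ε := min (ε0/2) (1/4) with hεdef
  have hεpos : 0 < ε := lt_min (by linarith) (by norm_num)
  have hεle : ε ≤ 1/4 := min_le_right _ _
  have hεe0 : ε ≤ ε0/2 := min_le_left _ _
  obtain ⟨T1, hT1t2, hT1σ⟩ := hσs (ε/2) (by positivity)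
  have hposT : ∀ t, T1 ≤ t → 0 < t := fun t ht => by linarith [h1t2, hT1t2]
  have hfact : ∀ t, T1 ≤ t → 16 < ξ t ∧ 0 < L t ∧ L t < ε/2 ∧
      0 ≤ 1 - (L1 t^2 + 2*L2 t^2) ∧ L1 t^2 + 2*L2 t^2 ≤ 1 := by
    intro t ht
    have h1 := htr t (hT1t2.trans ht)
    have h2 := hT1σ t ht
    have h3 := hLpos t (hT1t2.trans ht)
    have h4 := hLσ t (hT1t2.trans ht)
    have h5 : 0 ≤ L1 t + 2*L2 t := by linarith [h1.1, h1.2.1]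
    have h6 : (L1 t + 2*L2 t)^2 ≤ (1/2:ℝ)^2 := pow_le_pow_left₀ h5 h1.2.2.2.le 2
    have h7 : L1 t^2 + 2*L2 t^2 ≤ (L1 t + 2*L2 t)^2 := by nlinarith [h1.1, h1.2.1]
    exact ⟨h1.2.2.1, h3, by linarith, by nlinarith, by nlinarith⟩
  have hLS : ∀ u, T1 ≤ u → 0 ≤ L u * (1 - (L1 u^2 + 2*L2 u^2)) ∧
      L u * (1 - (L1 u^2 + 2*L2 u^2)) ≤ L u := by
    intro u hu
    have hf := hfact u hu
    constructor
    · exact mul_nonneg hf.2.1.le hf.2.2.2.1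
    · nlinarith [hf.2.1, hf.2.2.2.1, hf.2.2.2.2]
  have hesc1 : ∃ t3, T1 ≤ t3 ∧ ξ t3 * L t3 - 1 < ε := by
    by_contra h
    push_neg at h
    set T := T1 + (max (ξ T1 * L T1 - 1) 0 + 1)/ε with hT
    have hfr : 0 ≤ (max (ξ T1 * L T1 - 1) 0 + 1)/ε := by positivity
    have hTT1 : T1 ≤ T := by rw [hT]; linarith
    have hgrow := deriv_le_growth (δ := -ε) hTT1 (fun u hu => hdm u (hposT u hu.1))
      (fun u hu => by
        have hf := hfact u hu.1
        have hm := h u hu.1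
        have h1 : 16 * ε ≤ ξ u * (ξ u * L u - 1) :=
          mul_le_mul hf.1.le hm hεpos.le (by linarith [hf.1])
        have h2 := (hLS u hu.1).2
        show -(ξ u) * (ξ u * L u - 1) + L u * (1 - (L1 u^2 + 2*L2 u^2)) ≤ -ε
        have h3 := hf.2.2.1
        linarith
        )
    have h1 := h T hTT1
    have h4 : T - T1 = (max (ξ T1 * L T1 - 1) 0 + 1)/ε := by rw [hT]; ring
    have h5 : (-ε) * ((max (ξ T1 * L T1 - 1) 0 + 1)/ε) = -(max (ξ T1 * L T1 - 1) 0 + 1) := by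
      field_simp
    rw [h4, h5] at hgrow
    have h3 : ξ T1 * L T1 - 1 ≤ max (ξ T1 * L T1 - 1) 0 := le_max_left _ _
    linarith
  obtain ⟨t3, hT1t3, ht3⟩ := hesc1
  have hentry : ∃ t5, T1 ≤ t5 ∧ -ε < ξ t5 * L t5 - 1 ∧ ξ t5 * L t5 - 1 < ε := by
    rcases lt_or_ge (-ε) (ξ t3 * L t3 - 1) with hc | hc
    · exact ⟨t3, hT1t3, hc, ht3⟩
    · have hesc2 : ∃ t4, t3 ≤ t4 ∧ -ε < ξ t4 * L t4 - 1 := by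
        by_contra h
        push_neg at h
        set T := t3 + (max (-(ξ t3 * L t3 - 1)) 0 + 1)/ε with hT
        have hfr : 0 ≤ (max (-(ξ t3 * L t3 - 1)) 0 + 1)/ε := by positivity
        have hTT3 : t3 ≤ T := by rw [hT]; linarith
        have hgrow := deriv_ge_growth (δ := ε) hTT3
          (fun u hu => hdm u (hposT u (hT1t3.trans hu.1)))
          (fun u hu => by
            have hf := hfact u (hT1t3.trans hu.1)
            have hm := h u hu.1
            have h1 : 16 * ε ≤ ξ u * (-(ξ u * L u - 1)) :=
              mul_le_mul hf.1.le (by linarith) hεpos.le (by linarith [hf.1])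
            have h2 := (hLS u (hT1t3.trans hu.1)).1
            show ε ≤ -(ξ u) * (ξ u * L u - 1) + L u * (1 - (L1 u^2 + 2*L2 u^2))
            linarith)
        have h1 := h T hTT3
        have h4 : T - t3 = (max (-(ξ t3 * L t3 - 1)) 0 + 1)/ε := by rw [hT]; ring
        have h5 : ε * ((max (-(ξ t3 * L t3 - 1)) 0 + 1)/ε) = max (-(ξ t3 * L t3 - 1)) 0 + 1 := by
          field_simp
        rw [h4, h5] at hgrow
        have h3 : -(ξ t3 * L t3 - 1) ≤ max (-(ξ t3 * L t3 - 1)) 0 := le_max_left _ _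
        linarith
      obtain ⟨t4, ht3t4, ht4⟩ := hesc2
      have hcont : ContinuousOn (fun t => ξ t * L t - 1) (Icc t3 t4) := fun u hu =>
        ((hdm u (hposT u (hT1t3.trans hu.1))).continuousAt).continuousWithinAt
      have ht3t4' : t3 ≤ t4 := ht3t4
      obtain ⟨v, hv⟩ : ∃ v, v = -ε + (min ε ((ξ t4 * L t4 - 1) + ε))/2 := ⟨_, rfl⟩
      have hminpos : 0 < min ε ((ξ t4 * L t4 - 1) + ε) := lt_min hεpos (by linarith)
      have hvmem : v ∈ Icc ((fun t => ξ t * L t - 1) t3) ((fun t => ξ t * L t - 1) t4) := by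
        constructor
        · show ξ t3 * L t3 - 1 ≤ v
          have : min ε ((ξ t4 * L t4 - 1) + ε) ≤ ε := min_le_left _ _
          linarith
        · show v ≤ ξ t4 * L t4 - 1
          have : min ε ((ξ t4 * L t4 - 1) + ε) ≤ (ξ t4 * L t4 - 1) + ε := min_le_right _ _
          linarith
      obtain ⟨t5, ht5mem, ht5v⟩ := intermediate_value_Icc ht3t4' hcont hvmem
      have hval : ξ t5 * L t5 - 1 = v := ht5v
      refine ⟨t5, hT1t3.trans ht5mem.1, ?_, ?_⟩
      · rw [hval]; rw [hv]; linarith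
      · rw [hval]; rw [hv]
        have : min ε ((ξ t4 * L t4 - 1) + ε) ≤ ε := min_le_left _ _
        linarith
  obtain ⟨t5, hT1t5, ht5l, ht5u⟩ := hentry
  have hinv := inv2 (f := fun t => ξ t * L t - 1) (g := fun t => ξ t * L t - 1)
    (f' := fun t => -(ξ t) * (ξ t * L t - 1) + L t * (1 - (L1 t^2 + 2*L2 t^2)))
    (g' := fun t => -(ξ t) * (ξ t * L t - 1) + L t * (1 - (L1 t^2 + 2*L2 t^2)))
    (a := t5) (c := -ε) (d := ε)
    (fun t ht => hdm t (hposT t (hT1t5.trans ht)))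
    (fun t ht => hdm t (hposT t (hT1t5.trans ht))) ht5l ht5u
    (fun s hs h0 _ _ => by
      have hf := hfact s (hT1t5.trans hs.le)
      have h0' : ξ s * L s - 1 = -ε := h0
      have h2 := (hLS s (hT1t5.trans hs.le)).1
      show 0 < -(ξ s) * (ξ s * L s - 1) + L s * (1 - (L1 s^2 + 2*L2 s^2))
      rw [h0']
      nlinarith [hf.1])
    (fun s hs h0 _ _ => by
      have hf := hfact s (hT1t5.trans hs.le)
      have h0' : ξ s * L s - 1 = ε := h0
      have h2 := (hLS s (hT1t5.trans hs.le)).2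
      have h3 := hf.2.2.1
      show -(ξ s) * (ξ s * L s - 1) + L s * (1 - (L1 s^2 + 2*L2 s^2)) < 0
      rw [h0']
      nlinarith [hf.1])
  refine ⟨t5, fun t ht => ?_⟩
  have h := hinv t ht
  rw [Real.dist_eq]
  have : |ξ t * L t - 1| < ε := abs_lt.2 ⟨h.1, h.2⟩
  linarith


set_option maxHeartbeats 2000000 in
lemma R_bound {ξ L1 L2 R : ℝ → ℝ} {t2 : ℝ}
    (hd0 : ∀ t, 0 < t → HasDerivAt ξ (1 - L1 t^2 - 2*L2 t^2) t)
    (hd1 : ∀ t, 0 < t → HasDerivAt L1 (1 - ξ t * L1 t) t)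
    (h1t2 : 1 ≤ t2)
    (htr : ∀ t, t2 ≤ t → 0 < L1 t ∧ 0 < L2 t ∧ 16 < ξ t ∧ L1 t + 2*L2 t < 1/2)
    (hRpos : ∀ t, 0 < t → 0 < R t)
    (hdR : ∀ t, 0 < t → HasDerivAt R (-(R t) * L1 t) t) :
    IsBoundedUnder (· ≤ ·) atTop (fun t => t * R t) := by
  have hposT : ∀ t, t2 ≤ t → 0 < t := fun t ht => by linarith
  have hSle : ∀ t, t2 ≤ t → L1 t^2 + 2*L2 t^2 ≤ 1 := by
    intro t ht
    have h1 := htr t ht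
    have h5 : 0 ≤ L1 t + 2*L2 t := by linarith [h1.1, h1.2.1]
    have h6 : (L1 t + 2*L2 t)^2 ≤ (1/2:ℝ)^2 := pow_le_pow_left₀ h5 h1.2.2.2.le 2
    nlinarith [h1.1, h1.2.1]
  obtain ⟨C, hC⟩ : ∃ C, C = max (ξ t2 - t2) 0 := ⟨_, rfl⟩
  have hCnn : 0 ≤ C := by rw [hC]; exact le_max_right _ _
  have hξle : ∀ t, t2 ≤ t → ξ t ≤ t + C := by
    intro t ht
    have h := deriv_le_growth (δ := 1) ht (fun u hu => hd0 u (hposT u hu.1))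
      (fun u hu => by
        show 1 - L1 u^2 - 2*L2 u^2 ≤ 1
        nlinarith [sq_nonneg (L1 u), sq_nonneg (L2 u)])
    have h2 : ξ t2 - t2 ≤ C := by rw [hC]; exact le_max_left _ _
    linarith
  have hdm : ∀ t, 0 < t → HasDerivAt (fun t => ξ t * L1 t - 1)
      (-(ξ t) * (ξ t * L1 t - 1) + L1 t * (1 - (L1 t^2 + 2*L2 t^2))) t := by
    intro t ht
    have h := ((hd0 t ht).mul (hd1 t ht)).sub_const 1
    exact h.congr_deriv (by ring)
  obtain ⟨B, hB⟩ : ∃ B, B = |ξ t2 * L1 t2 - 1| + 1 := ⟨_, rfl⟩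
  have hB1 : 1 ≤ B := by rw [hB]; have := abs_nonneg (ξ t2 * L1 t2 - 1); linarith
  have hexp : ∀ t : ℝ, HasDerivAt (fun t => Real.exp (t2 - t))
      (Real.exp (t2 - t) * (0 - 1)) t :=
    fun t => ((hasDerivAt_const t t2).sub (hasDerivAt_id t)).exp
  have hm1low : ∀ t, t2 ≤ t → -(B * Real.exp (t2 - t)) < ξ t * L1 t - 1 := by
    have hbar := barrier_lower (a := t2) (c := 0)
      (f := fun t => (ξ t * L1 t - 1) + B * Real.exp (t2 - t))
      (f' := fun t => (-(ξ t) * (ξ t * L1 t - 1) + L1 t * (1 - (L1 t^2 + 2*L2 t^2)))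
        + B * (Real.exp (t2 - t) * (0 - 1)))
      (fun t ht => (hdm t (hposT t ht)).add ((hexp t).const_mul B))
      (by
        show 0 < (ξ t2 * L1 t2 - 1) + B * Real.exp (t2 - t2)
        rw [sub_self, Real.exp_zero, mul_one, hB]
        have := neg_abs_le (ξ t2 * L1 t2 - 1)
        linarith)
      (fun s hs h0 _ => by
        have h0' : (ξ s * L1 s - 1) + B * Real.exp (t2 - s) = 0 := h0
        have hE : 0 < Real.exp (t2 - s) := Real.exp_pos _
        have hBE : 0 < B * Real.exp (t2 - s) := mul_pos (by linarith) hE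
        have hm1neg : ξ s * L1 s - 1 < 0 := by linarith
        have hξs := (htr s (le_of_lt hs)).2.2.1
        have hL1s := (htr s (le_of_lt hs)).1
        have hSs := hSle s (le_of_lt hs)
        have hLSnn : 0 ≤ L1 s * (1 - (L1 s^2 + 2*L2 s^2)) := mul_nonneg hL1s.le (by linarith)
        show 0 < (-(ξ s) * (ξ s * L1 s - 1) + L1 s * (1 - (L1 s^2 + 2*L2 s^2)))
          + B * (Real.exp (t2 - s) * (0 - 1))
        have hBe : B * (Real.exp (t2 - s) * (0 - 1)) = -(B * Real.exp (t2 - s)) := by ring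
        have hp : 0 < (-(ξ s * L1 s - 1))*(ξ s - 1) :=
          mul_pos (by linarith) (by linarith)
        have hpe : (-(ξ s * L1 s - 1))*(ξ s - 1)
            = -(ξ s)*(ξ s * L1 s - 1) + (ξ s * L1 s - 1) := by ring
        linarith)
    intro t ht
    have h := hbar t ht
    have h' : 0 < (ξ t * L1 t - 1) + B * Real.exp (t2 - t) := h
    linarith
  have hrecip : ∀ t, t2 ≤ t → 1/t - L1 t ≤ C * (t^2)⁻¹ + B * Real.exp (t2 - t) := by
    intro t ht
    have htpos := hposT t ht
    have hξpos : (0:ℝ) < ξ t := by linarith [(htr t ht).2.2.1]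
    have hA : 1/t - 1/(ξ t) ≤ C * (t^2)⁻¹ := by
      have h1 : 1/(t + C) ≤ 1/(ξ t) := one_div_le_one_div_of_le hξpos (hξle t ht)
      have htC : 0 < t + C := by linarith
      have h2 : 1/t - 1/(t + C) = C/(t*(t+C)) := by field_simp; ring
      have h3 : C/(t*(t+C)) ≤ C * (t^2)⁻¹ := by
        rw [div_eq_mul_inv]
        apply mul_le_mul_of_nonneg_left _ hCnn
        apply inv_anti₀ (by positivity)
        nlinarith
      linarith
    have hBnd : 1/(ξ t) - L1 t ≤ B * Real.exp (t2 - t) := by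
      have hm := hm1low t ht
      have h4 : 1/(ξ t) - L1 t = -(ξ t * L1 t - 1)/(ξ t) := by
        field_simp
        ring
      rw [h4]
      rcases le_or_gt (-(ξ t * L1 t - 1)) 0 with hn | hn
      · have h5 : -(ξ t * L1 t - 1)/(ξ t) ≤ 0 := div_nonpos_of_nonpos_of_nonneg hn hξpos.le
        have h6 : 0 ≤ B * Real.exp (t2 - t) := by positivity
        exact le_trans h5 h6
      · have h7 : -(ξ t * L1 t - 1)/(ξ t) ≤ -(ξ t * L1 t - 1) := by
          rw [div_le_iff₀ hξpos]
          nlinarith [(htr t ht).2.2.1]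
        linarith only [h7, hm]
    linarith
  have hdψ : ∀ t, t2 ≤ t → HasDerivAt
      (fun t => Real.log (t * R t) + C * t⁻¹ + B * Real.exp (t2 - t))
      ((1 * R t + t * (-(R t) * L1 t)) / (t * R t) + C * -(t^2)⁻¹
        + B * (Real.exp (t2 - t) * (0 - 1))) t := by
    intro t ht
    have htpos := hposT t ht
    have hRt := hRpos t htpos
    have hlog := (((hasDerivAt_id t).mul (hdR t htpos)).log
      (ne_of_gt (mul_pos htpos hRt)))
    have hinv' := (hasDerivAt_inv (ne_of_gt htpos)).const_mul C
    exact (hlog.add hinv').add ((hexp t).const_mul B)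
  have hψle : ∀ t, t2 ≤ t → Real.log (t * R t) + C * t⁻¹ + B * Real.exp (t2 - t) ≤
      Real.log (t2 * R t2) + C * t2⁻¹ + B * Real.exp (t2 - t2) := by
    intro t ht
    have h := deriv_le_growth (δ := 0) ht (fun u hu => hdψ u hu.1)
      (fun u hu => by
        have hupos := hposT u hu.1
        have hRu := hRpos u hupos
        have h1 : (1 * R u + u * (-(R u) * L1 u)) / (u * R u) = 1/u - L1 u := by
          field_simp
          ring
        have h2 := hrecip u hu.1
        rw [h1]
        have h3 : C * -(u^2)⁻¹ = -(C * (u^2)⁻¹) := by ring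
        have h4 : B * (Real.exp (t2 - u) * (0 - 1)) = -(B * Real.exp (t2 - u)) := by ring
        rw [h3, h4]
        linarith)
    linarith only [h]
  apply isBoundedUnder_of_eventually_le
    (a := Real.exp (Real.log (t2 * R t2) + C * t2⁻¹ + B * Real.exp (t2 - t2)))
  filter_upwards [eventually_ge_atTop t2] with t ht
  have htpos := hposT t ht
  have hRt := hRpos t htpos
  have htRt : 0 < t * R t := mul_pos htpos hRt
  have h1 : Real.log (t * R t) ≤ Real.log (t2 * R t2) + C * t2⁻¹ + B * Real.exp (t2 - t2) := by
    have h2 := hψle t ht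
    have h3 : 0 ≤ C * t⁻¹ := by positivity
    have h4 : 0 ≤ B * Real.exp (t2 - t) := by positivity
    linarith
  calc t * R t = Real.exp (Real.log (t * R t)) := (Real.exp_log htRt).symm
    _ ≤ _ := Real.exp_le_exp.2 h1

/-- Asymptotically conical behavior of the reduced U(2)-invariant expander
solutions for `α > 0`. -/
theorem reduced_system_asymptotics (α : ℝ) (hα : 0 < α) (ξ L1 L2 : ℝ → ℝ)
    (hsys : ReducedSystem ξ L1 L2) (hbc : ReducedBC α ξ L1 L2) :
    Tendsto (fun t => ξ t / t) atTop (nhds 1) ∧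
    Tendsto (fun t => t * L1 t) atTop (nhds 1) ∧
    Tendsto (fun t => t * L2 t) atTop (nhds 1) ∧
    ∀ R : ℝ → ℝ, (∀ t ∈ Ioi (0 : ℝ), 0 < R t) →
      (∀ t ∈ Ioi (0 : ℝ), HasDerivAt R (-(R t) * L1 t) t) →
      IsBoundedUnder (· ≤ ·) atTop (fun t => t * R t) := by
  have hd0 : ∀ t, 0 < t → HasDerivAt ξ (1 - L1 t^2 - 2*L2 t^2) t :=
    fun t ht => (hsys t (Set.mem_Ioi.mpr ht)).1
  have hd1 : ∀ t, 0 < t → HasDerivAt L1 (1 - ξ t * L1 t) t :=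
    fun t ht => (hsys t (Set.mem_Ioi.mpr ht)).2.1
  have hd2 : ∀ t, 0 < t → HasDerivAt L2 (1 - ξ t * L2 t) t :=
    fun t ht => (hsys t (Set.mem_Ioi.mpr ht)).2.2
  obtain ⟨a, ha, hL2a, hL1a, hDa, hKa⟩ := choose_a hα hbc
  obtain ⟨t2, h1t2, hat2, htr, hgrow, hσs⟩ := dynamics hα hd0 hd1 hd2 ha hL2a hL1a hDa hKa
  have hξt : Tendsto (fun t => ξ t / t) atTop (nhds 1) := xi_lim hd0 h1t2 htr hσs
  have hm1 : Tendsto (fun t => ξ t * L1 t) atTop (nhds 1) :=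
    m_lim hd0 hd1 h1t2 htr hσs (fun t ht => (htr t ht).1)
      (fun t ht => by have := (htr t ht).2.1; linarith)
  have hm2 : Tendsto (fun t => ξ t * L2 t) atTop (nhds 1) :=
    m_lim hd0 hd2 h1t2 htr hσs (fun t ht => (htr t ht).2.1)
      (fun t ht => by have h1 := (htr t ht).1; have h2 := (htr t ht).2.1; linarith)
  have hinv : Tendsto (fun t => (ξ t / t)⁻¹) atTop (nhds 1) := by
    have := hξt.inv₀ (one_ne_zero)
    simpa using this
  have hmulkey : ∀ L : ℝ → ℝ, Tendsto (fun t => ξ t * L t) atTop (nhds 1) →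
      Tendsto (fun t => t * L t) atTop (nhds 1) := by
    intro L hm
    have hprod : Tendsto (fun t => (ξ t * L t) * (ξ t / t)⁻¹) atTop (nhds 1) := by
      have := hm.mul hinv
      simpa using this
    apply hprod.congr'
    filter_upwards [eventually_ge_atTop (max t2 1)] with t ht
    have ht2' : t2 ≤ t := le_trans (le_max_left _ _) ht
    have ht1 : (1:ℝ) ≤ t := le_trans (le_max_right _ _) ht
    have htpos : (0:ℝ) < t := by linarith
    have hξpos : (0:ℝ) < ξ t := by linarith [(htr t ht2').2.2.1]
    field_simp
  refine ⟨hξt, hmulkey L1 hm1, hmulkey L2 hm2, ?_⟩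
  intro R hRp hdR
  exact R_bound hd0 hd1 h1t2 htr (fun t ht => hRp t (Set.mem_Ioi.mpr ht))
    (fun t ht => hdR t (Set.mem_Ioi.mpr ht))
end

section
/- Let λ ∈ ℝ, let I ⊆ ℝ be an interval, and let ξ, Lk, Ri, Rk : I → ℝ be differentiable functions satisfying ξ' = −Lk² − 2Rk² − λ, Lk' = −ξ·Lk + 2Rk² − λ, Ri' = −Ri·Lk, and Rk' = Rk·Lk − 2Rk² on I. Then the function Z := λ + Rk·(ξ + Lk − 4Ri) is differentiable on I with Z' = −2·Rk·Z; consequently, if Z(t0) = 0 for some t0 ∈ I, then Z vanishes identically on I. -/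
open Set

/-- Gronwall-type vanishing lemma on a compact interval, forward in time. -/
lemma aux_vanish_right (Z R : ℝ → ℝ) (a b : ℝ) (hab : a ≤ b)
    (hR : ContinuousOn R (Icc a b))
    (hZc : ContinuousOn Z (Icc a b))
    (hZ' : ∀ s ∈ Ico a b, HasDerivWithinAt Z (-2 * R s * Z s) (Ici s) s)
    (hZa : Z a = 0) : ∀ s ∈ Icc a b, Z s = 0 := by
  obtain ⟨C, hC⟩ := (isCompact_Icc (a := a) (b := b)).exists_bound_of_continuousOn hR
  have hC0 : 0 ≤ C := le_trans (norm_nonneg _) (hC a ⟨le_refl a, hab⟩)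
  set R' : ℝ → ℝ := fun t => R (min b (max a t)) with hR'def
  have hR'eq : ∀ t ∈ Icc a b, R' t = R t := by
    intro t ht
    simp only [hR'def]
    rw [max_eq_right ht.1, min_eq_right ht.2]
  have hR'bd : ∀ t, |R' t| ≤ C := by
    intro t
    have : min b (max a t) ∈ Icc a b := by
      constructor
      · exact le_min hab (le_max_left a t)
      · exact min_le_left _ _
    simpa using hC _ this
  set v : ℝ → ℝ → ℝ := fun t x => -2 * R' t * x with hv_def
  have hv : ∀ t, LipschitzOnWith (Real.toNNReal (2 * C)) (v t) univ := by
    intro t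
    apply LipschitzOnWith.mono _ (subset_univ univ)
    apply LipschitzWith.lipschitzOnWith
    apply LipschitzWith.of_dist_le_mul
    intro x y
    simp only [hv_def, Real.dist_eq]
    rw [← mul_sub, abs_mul]
    have h1 : |(-2 : ℝ) * R' t| ≤ 2 * C := by
      rw [abs_mul]
      calc |(-2 : ℝ)| * |R' t| = 2 * |R' t| := by norm_num
        _ ≤ 2 * C := by nlinarith [hR'bd t]
    calc |(-2 : ℝ) * R' t| * |x - y| ≤ (2 * C) * |x - y| := by
            apply mul_le_mul_of_nonneg_right h1 (abs_nonneg _)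
      _ = (Real.toNNReal (2 * C) : ℝ) * |x - y| := by
            rw [Real.coe_toNNReal _ (by positivity)]
  have := ODE_solution_unique_of_mem_Icc_right (v := v) (s := fun _ => univ)
    (f := Z) (g := fun _ => (0 : ℝ)) (a := a) (b := b) (fun t _ => hv t) hZc
    (fun t ht => by
      have := hZ' t ht
      simpa [hv_def, hR'eq t ⟨ht.1, le_of_lt ht.2⟩] using this)
    (fun t _ => mem_univ _)
    continuousOn_const
    (fun t ht => by simpa [hv_def] using (hasDerivWithinAt_const t (Ici t) (0:ℝ)))
    (fun t _ => mem_univ _)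
    (by simpa using hZa)
  exact this

/-- Gronwall-type vanishing lemma on a compact interval, backward in time. -/
lemma aux_vanish_left (Z R : ℝ → ℝ) (a b : ℝ) (hab : a ≤ b)
    (hR : ContinuousOn R (Icc a b))
    (hZc : ContinuousOn Z (Icc a b))
    (hZ' : ∀ s ∈ Ioc a b, HasDerivWithinAt Z (-2 * R s * Z s) (Iic s) s)
    (hZb : Z b = 0) : ∀ s ∈ Icc a b, Z s = 0 := by
  obtain ⟨C, hC⟩ := (isCompact_Icc (a := a) (b := b)).exists_bound_of_continuousOn hR
  have hC0 : 0 ≤ C := le_trans (norm_nonneg _) (hC a ⟨le_refl a, hab⟩)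
  set R' : ℝ → ℝ := fun t => R (min b (max a t)) with hR'def
  have hR'eq : ∀ t ∈ Icc a b, R' t = R t := by
    intro t ht
    simp only [hR'def]
    rw [max_eq_right ht.1, min_eq_right ht.2]
  have hR'bd : ∀ t, |R' t| ≤ C := by
    intro t
    have : min b (max a t) ∈ Icc a b := by
      constructor
      · exact le_min hab (le_max_left a t)
      · exact min_le_left _ _
    simpa using hC _ this
  set v : ℝ → ℝ → ℝ := fun t x => -2 * R' t * x with hv_def
  have hv : ∀ t, LipschitzOnWith (Real.toNNReal (2 * C)) (v t) univ := by
    intro t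
    apply LipschitzOnWith.mono _ (subset_univ univ)
    apply LipschitzWith.lipschitzOnWith
    apply LipschitzWith.of_dist_le_mul
    intro x y
    simp only [hv_def, Real.dist_eq]
    rw [← mul_sub, abs_mul]
    have h1 : |(-2 : ℝ) * R' t| ≤ 2 * C := by
      rw [abs_mul]
      calc |(-2 : ℝ)| * |R' t| = 2 * |R' t| := by norm_num
        _ ≤ 2 * C := by nlinarith [hR'bd t]
    calc |(-2 : ℝ) * R' t| * |x - y| ≤ (2 * C) * |x - y| := by
            apply mul_le_mul_of_nonneg_right h1 (abs_nonneg _)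
      _ = (Real.toNNReal (2 * C) : ℝ) * |x - y| := by
            rw [Real.coe_toNNReal _ (by positivity)]
  have := ODE_solution_unique_of_mem_Icc_left (v := v) (s := fun _ => univ)
    (f := Z) (g := fun _ => (0 : ℝ)) (a := a) (b := b) (fun t _ => hv t) hZc
    (fun t ht => by
      have := hZ' t ht
      simpa [hv_def, hR'eq t ⟨le_of_lt ht.1, ht.2⟩] using this)
    (fun t _ => mem_univ _)
    continuousOn_const
    (fun t ht => by simpa [hv_def] using (hasDerivWithinAt_const t (Iic t) (0:ℝ)))
    (fun t _ => mem_univ _)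
    (by simpa using hZb)
  exact this

/-- Along solutions of the U(2)-invariant Kähler subsystem, the quantity
`Z = λ + Rk·(ξ + Lk − 4Ri)` satisfies `Z' = −2·Rk·Z`; consequently if `Z`
vanishes at one point of the interval `I`, it vanishes identically on `I`. -/
theorem kahler_conserved_quantity (lam : ℝ) (I : Set ℝ) (hI : I.OrdConnected)
    (ξ Lk Ri Rk : ℝ → ℝ)
    (hξ : ∀ t ∈ I, HasDerivWithinAt ξ (-(Lk t) ^ 2 - 2 * (Rk t) ^ 2 - lam) I t)
    (hLk : ∀ t ∈ I, HasDerivWithinAt Lk (-(ξ t) * Lk t + 2 * (Rk t) ^ 2 - lam) I t)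
    (hRi : ∀ t ∈ I, HasDerivWithinAt Ri (-(Ri t) * Lk t) I t)
    (hRk : ∀ t ∈ I, HasDerivWithinAt Rk (Rk t * Lk t - 2 * (Rk t) ^ 2) I t) :
    (∀ t ∈ I,
      HasDerivWithinAt (fun s => lam + Rk s * (ξ s + Lk s - 4 * Ri s))
        (-2 * Rk t * (lam + Rk t * (ξ t + Lk t - 4 * Ri t))) I t) ∧
    (∀ t₀ ∈ I, lam + Rk t₀ * (ξ t₀ + Lk t₀ - 4 * Ri t₀) = 0 →
      ∀ t ∈ I, lam + Rk t * (ξ t + Lk t - 4 * Ri t) = 0) := by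
  set Z : ℝ → ℝ := fun s => lam + Rk s * (ξ s + Lk s - 4 * Ri s) with hZdef
  have hZ' : ∀ t ∈ I, HasDerivWithinAt Z (-2 * Rk t * Z t) I t := by
    intro t ht
    have h := (hasDerivWithinAt_const t I lam).add
      (((hRk t ht).mul (((hξ t ht).add (hLk t ht)).sub
        ((hasDerivWithinAt_const t I (4:ℝ)).mul (hRi t ht)))))
    refine h.congr_deriv ?_
    simp only [hZdef, Pi.add_apply, Pi.sub_apply, Pi.mul_apply]
    ring
  refine ⟨hZ', ?_⟩
  intro t₀ ht₀ hZ0 t ht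
  have hZc : ContinuousOn Z I := fun s hs => (hZ' s hs).continuousWithinAt
  have hRkc : ContinuousOn Rk I := fun s hs => (hRk s hs).continuousWithinAt
  rcases le_total t₀ t with hle | hle
  · -- forward
    have hsub : Icc t₀ t ⊆ I := hI.out ht₀ ht
    have := aux_vanish_right Z Rk t₀ t hle (hRkc.mono hsub) (hZc.mono hsub)
      (fun s hs => by
        have hsI : s ∈ I := hsub ⟨hs.1, le_of_lt hs.2⟩
        have hd := (hZ' s hsI).mono hsub
        exact hd.mono_of_mem_nhdsWithin (Icc_mem_nhdsGE_of_mem hs))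
      hZ0
    exact this t ⟨hle, le_refl t⟩
  · -- backward
    have hsub : Icc t t₀ ⊆ I := hI.out ht ht₀
    have := aux_vanish_left Z Rk t t₀ hle (hRkc.mono hsub) (hZc.mono hsub)
      (fun s hs => by
        have hsI : s ∈ I := hsub ⟨le_of_lt hs.1, hs.2⟩
        have hd := (hZ' s hsI).mono hsub
        exact hd.mono_of_mem_nhdsWithin (Icc_mem_nhdsLE_of_mem hs))
      hZ0
    exact this t ⟨le_refl t, hle⟩
end
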